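/- arXiv:1803.04202 — 4 statements merged into one kernel-verified Lean document; each statement's English description precedes it below -/
import Mathlib

section
/- Let G be a group such that every element of G has finitely many conjugates, with |x^G| ≤ m for all x ∈ G. Then the commutator subgroup G' is finite, of order bounded by a function of m only. -/
open Subgroup Function
open scoped commutatorElement

namespace BFC

variable {G : Type*} [Group G]

/-- The conjugacy class as a set, in the exact form of the problem statement. -/
def cc (x : G) : Set G := {y : G | ∃ g : G, g * x * g⁻¹ = y}

lemma mem_cc_self (x : G) : x ∈ cc x := ⟨1, by group⟩

lemma cc_nonempty (x : G) : (cc x).Nonempty := ⟨x, mem_cc_self x⟩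

/-- Conjugacy class equals the orbit of the conjugation action. -/
lemma cc_eq_orbit (x : G) : cc x = MulAction.orbit (ConjAct G) x := by
  ext y
  constructor
  · rintro ⟨g, rfl⟩
    exact ⟨ConjAct.toConjAct g, by simp [ConjAct.smul_def]⟩
  · rintro ⟨g, rfl⟩
    exact ⟨ConjAct.ofConjAct g, by simp [ConjAct.smul_def]⟩

lemma index_centralizer_eq (x : G) :
    (centralizer {x}).index = Nat.card (cc x) := by
  rw [Subgroup.centralizer_eq_comap_stabilizer x]
  refine (Subgroup.index_comap_of_surjective (G := ConjAct G) (G' := G)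
    (H := MulAction.stabilizer (ConjAct G) x) ConjAct.toConjAct.surjective).trans ?_
  rw [MulAction.index_stabilizer, cc_eq_orbit, Nat.card_coe_set_eq]

lemma card_cc_pos (x : G) (h : (cc x).Finite) : 0 < Nat.card (cc x) := by
  have : Finite (cc x) := h
  exact Nat.card_pos_iff.mpr ⟨(cc_nonempty x).to_subtype, h⟩

lemma finiteIndex_centralizer (x : G) (h : (cc x).Finite) :
    (centralizer {x}).FiniteIndex := by
  constructor
  rw [index_centralizer_eq]
  exact (card_cc_pos x h).ne'

/-- Schur-type bound: any group whose center has index at most `c`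
has derived subgroup of card at most `schurB c`. -/
def schurB (c : ℕ) : ℕ :=
  max 1 ((Finset.range (c * c + 1)).sup Subgroup.cardCommutatorBound)

lemma one_le_schurB (c : ℕ) : 1 ≤ schurB c := le_max_left _ _

lemma schurB_mono : Monotone schurB := by
  intro c d hcd
  apply max_le (le_max_left _ _)
  refine le_trans (Finset.sup_mono ?_) (le_max_right _ _)
  intro i hi
  simp only [Finset.mem_range] at hi ⊢
  exact lt_of_lt_of_le hi (by nlinarith)

/-- commutators only depend on cosets modulo the center. -/
lemma commutator_center_shift {z w u v : G}
    (hz : ∀ g : G, z * g = g * z) (hw : ∀ g : G, w * g = g * w) :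
    ⁅u * z, v * w⁆ = ⁅u, v⁆ := by
  have h1 : ⁅u * z, v * w⁆ = (u * z) * (v * w) * (u * z)⁻¹ * (v * w)⁻¹ := rfl
  have h2 : ⁅u, v⁆ = u * v * u⁻¹ * v⁻¹ := rfl
  rw [h1, h2]
  have hz' : ∀ g : G, g * z = z * g := fun g => (hz g).symm
  have hw' : ∀ g : G, g * w = w * g := fun g => (hw g).symm
  calc (u * z) * (v * w) * (u * z)⁻¹ * (v * w)⁻¹
      = u * (z * (v * w) * z⁻¹) * u⁻¹ * (w⁻¹ * v⁻¹) := by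
        rw [mul_inv_rev, mul_inv_rev]; group
    _ = u * (v * w) * u⁻¹ * (w⁻¹ * v⁻¹) := by
        rw [mul_assoc z, hz (v * w * z⁻¹), mul_assoc (v*w), inv_mul_cancel, mul_one]
    _ = u * v * (w * u⁻¹ * w⁻¹) * v⁻¹ := by group
    _ = u * v * u⁻¹ * v⁻¹ := by
        have h3 : w * u⁻¹ * w⁻¹ = u⁻¹ := by rw [hw u⁻¹]; group
        rw [h3]

lemma commutatorSet_bound {H : Type*} [Group H] (hf : (Subgroup.center H).index ≠ 0) :
    Finite (commutatorSet H) ∧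
      Nat.card (commutatorSet H) ≤ (Subgroup.center H).index * (Subgroup.center H).index := by
  haveI : (Subgroup.center H).FiniteIndex := ⟨hf⟩
  set Z := Subgroup.center H with hZdef
  set F : (H ⧸ Z) × (H ⧸ Z) → H := fun p => ⁅p.1.out, p.2.out⁆ with hF
  have hsub : commutatorSet H ⊆ Set.range F := by
    rintro w ⟨u, v, rfl⟩
    refine ⟨((u : H ⧸ Z), (v : H ⧸ Z)), ?_⟩
    have hu : u⁻¹ * (↑u : H ⧸ Z).out ∈ Z := by
      rw [← QuotientGroup.eq]
      exact (QuotientGroup.out_eq' (↑u : H ⧸ Z)).symm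
    have hv : v⁻¹ * (↑v : H ⧸ Z).out ∈ Z := by
      rw [← QuotientGroup.eq]
      exact (QuotientGroup.out_eq' (↑v : H ⧸ Z)).symm
    have hu' : (↑u : H ⧸ Z).out = u * (u⁻¹ * (↑u : H ⧸ Z).out) := by group
    have hv' : (↑v : H ⧸ Z).out = v * (v⁻¹ * (↑v : H ⧸ Z).out) := by group
    show ⁅(↑u : H ⧸ Z).out, (↑v : H ⧸ Z).out⁆ = ⁅u, v⁆
    rw [hu', hv']
    exact commutator_center_shift
      (fun g => ((Subgroup.mem_center_iff.mp hu) g).symm)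
      (fun g => ((Subgroup.mem_center_iff.mp hv) g).symm)
  haveI : Finite (H ⧸ Z) := Z.finite_quotient_of_finiteIndex
  have hfin : (commutatorSet H).Finite := (Set.finite_range F).subset hsub
  refine ⟨hfin, ?_⟩
  calc Nat.card (commutatorSet H) = (commutatorSet H).ncard := Nat.card_coe_set_eq _
    _ ≤ (Set.range F).ncard := Set.ncard_le_ncard hsub (Set.finite_range F)
    _ = Nat.card (Set.range F) := (Nat.card_coe_set_eq _).symm
    _ ≤ Nat.card ((H ⧸ Z) × (H ⧸ Z)) :=
        Nat.card_le_card_of_surjective _ Set.rangeFactorization_surjective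
    _ = (Subgroup.center H).index * (Subgroup.center H).index := by
        rw [Nat.card_prod]; rfl

/-- If the center of `H` has index at most `c`, its derived subgroup
has order at most `schurB c`. -/
lemma schur_bound {H : Type*} [Group H] (c : ℕ)
    (hf : (Subgroup.center H).index ≠ 0) (hc : (Subgroup.center H).index ≤ c) :
    Finite (_root_.commutator H) ∧ Nat.card (_root_.commutator H) ≤ schurB c := by
  obtain ⟨hfin, hcard⟩ := commutatorSet_bound hf
  refine ⟨inferInstance, ?_⟩
  haveI := hfin
  refine le_trans (Subgroup.card_commutator_le_of_finite_commutatorSet H) ?_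
  refine le_trans (Finset.le_sup (f := Subgroup.cardCommutatorBound) ?_) (le_max_right _ _)
  rw [Finset.mem_range, Nat.lt_succ_iff]
  exact le_trans hcard (Nat.mul_le_mul hc hc)

/-- The center of the closure of a finite set has bounded index therein. -/
lemma center_index_closure (n : ℕ)
    (hn : ∀ x : G, (cc x).Finite ∧ Nat.card (cc x) ≤ n) (Y : Finset G) :
    (Subgroup.center ↥(closure (Y : Set G))).index ≠ 0 ∧
      (Subgroup.center ↥(closure (Y : Set G))).index ≤ n ^ Y.card := by
  classical
  haveI : ∀ y : G, (centralizer {y}).FiniteIndex := fun y => finiteIndex_centralizer y (hn y).1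
  set P := closure (Y : Set G) with hPdef
  set f : {y // y ∈ Y} → Subgroup G := fun y => centralizer {(y : G)} with hfdef
  set Z := ⨅ y : {y // y ∈ Y}, f y with hZdef
  have hZP : Z.subgroupOf P ≤ Subgroup.center P := by
    rintro ⟨x, hxP⟩ hmem
    rw [Subgroup.mem_subgroupOf] at hmem
    simp only [hZdef, Subgroup.mem_iInf] at hmem
    rw [Subgroup.mem_center_iff]
    rintro ⟨p, hp⟩
    have hcomm : ∀ q ∈ P, Commute q x := by
      intro q hq
      refine closure_induction (fun w hw => ?_) (Commute.one_left x)
        (fun w w' _ _ hcw hcw' => hcw.mul_left hcw')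
        (fun w _ hcw => hcw.inv_left) hq
      exact Subgroup.mem_centralizer_iff.mp (hmem ⟨w, hw⟩) w (Set.mem_singleton _)
    exact Subtype.ext (hcomm p hp)
  have hrel_ne : Z.relIndex P ≠ 0 := by
    apply Subgroup.relIndex_iInf_ne_zero
    intro y
    exact (Subgroup.instFiniteIndex_subgroupOf (f y) P).index_ne_zero
  have hrel_le : Z.relIndex P ≤ n ^ Y.card := by
    refine le_trans (Subgroup.relIndex_iInf_le f) ?_
    have hbound : ∀ y : {y // y ∈ Y}, (f y).relIndex P ≤ n := by
      intro y
      have h1 : (f y).relIndex P ≤ (f y).relIndex ⊤ :=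
        Subgroup.relIndex_le_of_le_right le_top
          (by rw [Subgroup.relIndex_top_right]; exact (this (y : G)).index_ne_zero)
      rw [Subgroup.relIndex_top_right] at h1
      refine le_trans h1 ?_
      rw [index_centralizer_eq]
      exact (hn (y : G)).2
    calc ∏ y : {y // y ∈ Y}, (f y).relIndex P ≤ ∏ _y : {y // y ∈ Y}, n :=
          Finset.prod_le_prod' fun i _ => hbound i
      _ = n ^ Y.card := by
          rw [Finset.prod_const, Finset.card_univ, Fintype.card_coe]
  have hdvd : (Subgroup.center P).index ∣ Z.relIndex P :=
    Subgroup.index_dvd_of_le hZP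
  constructor
  · intro h0
    rw [h0] at hdvd
    exact hrel_ne (Nat.eq_zero_of_zero_dvd hdvd)
  · exact le_trans (Nat.le_of_dvd (Nat.pos_of_ne_zero hrel_ne) hdvd) hrel_le

lemma commutator_closure_bound (n : ℕ)
    (hn : ∀ x : G, (cc x).Finite ∧ Nat.card (cc x) ≤ n) (Y : Finset G) :
    Finite (_root_.commutator ↥(closure (Y : Set G))) ∧
      Nat.card (_root_.commutator ↥(closure (Y : Set G))) ≤ schurB (n ^ Y.card) := by
  obtain ⟨h0, hle⟩ := center_index_closure n hn Y
  exact schur_bound _ h0 hle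

/-- Every commutator has order at most `schurB (n ^ 2)`. -/
lemma orderOf_commutator_le (n : ℕ)
    (hn : ∀ x : G, (cc x).Finite ∧ Nat.card (cc x) ≤ n) (u v : G) :
    0 < orderOf ⁅u, v⁆ ∧ orderOf ⁅u, v⁆ ≤ schurB (n ^ 2) := by
  classical
  have h1n : 1 ≤ n := by
    have h1 := (hn 1).2
    have h2 := card_cc_pos 1 (hn 1).1
    omega
  set Y : Finset G := {u, v} with hYdef
  have hYcard : Y.card ≤ 2 := le_trans (Finset.card_insert_le _ _) (by simp)
  obtain ⟨hfin, hle⟩ := commutator_closure_bound n hn Y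
  have hu : u ∈ closure (Y : Set G) := subset_closure (by simp [hYdef])
  have hv : v ∈ closure (Y : Set G) := subset_closure (by simp [hYdef])
  set c : ↥(closure (Y : Set G)) := ⁅(⟨u, hu⟩ : ↥(closure (Y : Set G))), ⟨v, hv⟩⁆ with hcdef
  have hc : c ∈ _root_.commutator ↥(closure (Y : Set G)) :=
    Subgroup.commutator_mem_commutator (mem_top _) (mem_top _)
  have h2 : orderOf (c : G) = orderOf c :=
    orderOf_injective (closure (Y : Set G)).subtype Subtype.coe_injective c
  have h3 : (c : G) = ⁅u, v⁆ := rfl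
  haveI := hfin
  have h4 : orderOf c ∣ Nat.card (_root_.commutator ↥(closure (Y : Set G))) :=
    Subgroup.orderOf_dvd_natCard _ hc
  have hpos : 0 < Nat.card (_root_.commutator ↥(closure (Y : Set G))) := Nat.card_pos
  have h5 : orderOf c ≤ schurB (n ^ 2) := by
    refine le_trans (Nat.le_of_dvd hpos h4) (le_trans hle (schurB_mono ?_))
    exact Nat.pow_le_pow_right h1n hYcard
  have h6 : 0 < orderOf c := Nat.pos_of_ne_zero fun h0 => by
    rw [h0] at h4
    exact hpos.ne' (Nat.eq_zero_of_zero_dvd h4)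
  rw [← h3, h2]
  exact ⟨h6, h5⟩

/-- Cardinality bound for an abelian group generated by `s` elements of order dividing `L`. -/
lemma card_comm_group_le {A : Type*} [CommGroup A] {S : Finset A} {L : ℕ} (hL : 1 < L)
    (hgen : Subgroup.closure (S : Set A) = ⊤) (hord : ∀ y ∈ S, y ^ L = 1) :
    Finite A ∧ Nat.card A ≤ L ^ S.card := by
  classical
  haveI : NeZero L := ⟨by omega⟩
  haveI : Fact (1 < L) := ⟨hL⟩
  set φf : ({ y // y ∈ S } → Multiplicative (ZMod L)) → A :=
    fun v => ∏ y : {y // y ∈ S}, (y : A) ^ (Multiplicative.toAdd (v y)).val with hφf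
  have hhom : ∀ v w, φf (v * w) = φf v * φf w := by
    intro v w
    rw [hφf]
    simp only
    rw [← Finset.prod_mul_distrib]
    refine Finset.prod_congr rfl fun y _ => ?_
    have h1 : (Multiplicative.toAdd ((v * w) y)).val
        = ((Multiplicative.toAdd (v y)) + (Multiplicative.toAdd (w y))).val := rfl
    rw [h1, ZMod.val_add, ← pow_eq_pow_mod _ (hord _ y.2), pow_add]
  set φ : ({ y // y ∈ S } → Multiplicative (ZMod L)) →* A := MonoidHom.mk' φf hhom with hφ
  have hsurj : Surjective φ := by
    have hrange : closure (S : Set A) ≤ φ.range := by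
      rw [Subgroup.closure_le]
      intro y hy
      have hmem : y ∈ S := hy
      refine ⟨fun y' => if y' = ⟨y, hmem⟩ then Multiplicative.ofAdd 1 else 1, ?_⟩
      have heval : φf (fun y' => if y' = ⟨y, hmem⟩ then Multiplicative.ofAdd 1 else 1) = y := by
        rw [hφf]
        simp only
        rw [Finset.prod_eq_single (⟨y, hmem⟩ : {y // y ∈ S})]
        · simp [ZMod.val_one]
        · intro b _ hb
          simp [hb]
        · intro hnotmem
          exact absurd (Finset.mem_univ _) hnotmem
      exact heval
    intro a
    have ha : a ∈ φ.range := hrange (by rw [hgen]; exact mem_top a)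
    exact ha
  refine ⟨Finite.of_surjective φ hsurj, ?_⟩
  calc Nat.card A ≤ Nat.card ({ y // y ∈ S } → Multiplicative (ZMod L)) :=
        Nat.card_le_card_of_surjective φ hsurj
    _ = L ^ S.card := by
        rw [Nat.card_fun]
        congr 1
        · rw [Nat.card_congr (Multiplicative.toAdd (α := ZMod L)), Nat.card_zmod]
        · rw [Nat.card_eq_fintype_card, Fintype.card_coe]

/-- The big bound for normal closures of small conjugation-stable sets of commutators. -/
def Mbound (n s : ℕ) : ℕ := (Nat.factorial (max 2 (schurB (n ^ 2)))) ^ s * schurB (n ^ s)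

lemma one_le_Mbound (n s : ℕ) : 1 ≤ Mbound n s :=
  Nat.one_le_iff_ne_zero.mpr (Nat.mul_ne_zero
    (pow_ne_zero _ (Nat.factorial_ne_zero _)) (Nat.one_le_iff_ne_zero.mp (one_le_schurB _)))

lemma Mbound_mono_right (n : ℕ) (hn : 1 ≤ n) {s t : ℕ} (hst : s ≤ t) :
    Mbound n s ≤ Mbound n t := by
  unfold Mbound
  have h2 : 2 ≤ max 2 (schurB (n ^ 2)) := le_max_left _ _
  have hf : 1 ≤ (Nat.factorial (max 2 (schurB (n ^ 2)))) := Nat.one_le_iff_ne_zero.mpr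
    (Nat.factorial_ne_zero _)
  exact Nat.mul_le_mul (Nat.pow_le_pow_right hf hst)
    (schurB_mono (Nat.pow_le_pow_right hn hst))

/-- Key boundedness lemma: the closure of a finite conjugation-stable set of commutators
is a finite normal subgroup of bounded order. -/
lemma normal_closure_bound (n s : ℕ)
    (hn : ∀ x : G, (cc x).Finite ∧ Nat.card (cc x) ≤ n)
    (Y : Set G) (hYfin : Y.Finite) (hYcard : Nat.card Y ≤ s)
    (hYconj : ∀ y ∈ Y, ∀ h : G, h * y * h⁻¹ ∈ Y)
    (hYcomm : ∀ y ∈ Y, ∃ u v : G, ⁅u, v⁆ = y) :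
    (closure Y).Normal ∧ Finite ↥(closure Y) ∧ Nat.card ↥(closure Y) ≤ Mbound n s := by
  classical
  have h1n : 1 ≤ n := by
    have h1 := (hn 1).2
    have h2 := card_cc_pos (1 : G) (hn 1).1
    omega
  -- normality
  have hnormal : (closure Y).Normal := by
    constructor
    intro x hx g
    refine closure_induction (p := fun x _ => g * x * g⁻¹ ∈ closure Y)
      (fun w hw => subset_closure (hYconj w hw g)) (by simpa using one_mem _)
      (fun w w' _ _ hw hw' => by
        show g * (w * w') * g⁻¹ ∈ closure Y
        have heq : g * (w * w') * g⁻¹ = (g * w * g⁻¹) * (g * w' * g⁻¹) := by group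
        rw [heq]; exact mul_mem hw hw')
      (fun w _ hw => by
        show g * w⁻¹ * g⁻¹ ∈ closure Y
        have heq : g * w⁻¹ * g⁻¹ = (g * w * g⁻¹)⁻¹ := by group
        rw [heq]; exact inv_mem hw) hx
  -- pass to a Finset of generators
  set YF := hYfin.toFinset with hYFdef
  have hYF : (YF : Set G) = Y := hYfin.coe_toFinset
  have hYFcard : YF.card ≤ s := by
    rw [← Set.ncard_eq_toFinset_card Y hYfin, ← Nat.card_coe_set_eq] at *
    exact hYcard
  rw [← hYF]
  rw [← hYF] at hnormal
  set P := closure (YF : Set G) with hPdef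
  refine ⟨hnormal, ?_⟩
  -- derived subgroup bound
  obtain ⟨hcommfin, hcommle⟩ := commutator_closure_bound n hn YF
  -- order bound on generators
  set E := max 2 (schurB (n ^ 2)) with hEdef
  set L := E.factorial with hLdef
  have hL : 1 < L := lt_of_lt_of_le (by norm_num : 1 < 2)
    (le_trans (le_max_left _ _) (Nat.self_le_factorial E))
  have hordL : ∀ y ∈ YF, orderOf y ∣ L := by
    intro y hy
    obtain ⟨u, v, huv⟩ := hYcomm y (by rw [← hYF]; exact hy)
    obtain ⟨hpos, hle⟩ := orderOf_commutator_le n hn u v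
    rw [huv] at hpos hle
    exact Nat.dvd_factorial hpos (le_trans hle (le_max_right _ _))
  -- abelianization generators
  have htop1 : closure (P.subtype ⁻¹' (YF : Set G)) = ⊤ :=
    Subgroup.closure_preimage_eq_top (YF : Set G)
  have hofsurj : Surjective (Abelianization.of (G := ↥P)) := fun x =>
    QuotientGroup.induction_on x fun g => ⟨g, rfl⟩
  have htop2 : Subgroup.closure (Abelianization.of '' (P.subtype ⁻¹' (YF : Set G))) = ⊤ := by
    rw [← MonoidHom.map_closure, htop1]
    exact Subgroup.map_top_of_surjective _ hofsurj
  -- the generating set in the abelianization, as a Finset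
  have hpreimfin : (P.subtype ⁻¹' (YF : Set G)).Finite :=
    Set.Finite.preimage (Subtype.coe_injective.injOn) (YF.finite_toSet)
  have himfin : (Abelianization.of '' (P.subtype ⁻¹' (YF : Set G))).Finite :=
    hpreimfin.image _
  set SF := himfin.toFinset with hSFdef
  have hSF : (SF : Set (Abelianization ↥P)) = _ := himfin.coe_toFinset
  have hSFcard : SF.card ≤ YF.card := by
    rw [← Set.ncard_eq_toFinset_card _ himfin]
    refine le_trans (Set.ncard_image_le hpreimfin) ?_
    have : (P.subtype ⁻¹' (YF : Set G)).ncard ≤ (YF : Set G).ncard := by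
      rw [← Set.ncard_image_of_injective _ (Subtype.coe_injective : Injective (P.subtype))]
      exact Set.ncard_le_ncard (Set.image_preimage_subset _ _) YF.finite_toSet
    simpa using this
  have hgenSF : Subgroup.closure (SF : Set (Abelianization ↥P)) = ⊤ := by rw [hSF]; exact htop2
  have hordSF : ∀ z ∈ SF, z ^ L = 1 := by
    intro z hz
    have hz' : z ∈ Abelianization.of '' (P.subtype ⁻¹' (YF : Set G)) := by
      rwa [← hSF, Finset.mem_coe]
    obtain ⟨w, hw, rfl⟩ := hz'
    have h1 : orderOf (Abelianization.of w) ∣ orderOf w := orderOf_map_dvd _ _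
    have h2 : orderOf w = orderOf (w : G) :=
      (orderOf_injective P.subtype Subtype.coe_injective w).symm
    have h3 : orderOf (w : G) ∣ L := hordL _ (by exact hw)
    exact orderOf_dvd_iff_pow_eq_one.mp (h1.trans (h2 ▸ h3))
  obtain ⟨habfin, hable⟩ := card_comm_group_le hL hgenSF hordSF
  -- combine
  have hcardP : Nat.card ↥P = Nat.card (Abelianization ↥P) * Nat.card (_root_.commutator ↥P) :=
    Subgroup.card_eq_card_quotient_mul_card_subgroup _
  have habpos : 0 < Nat.card (Abelianization ↥P) := Nat.card_pos
  have hcommpos : 0 < Nat.card (_root_.commutator ↥P) := Nat.card_pos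
  have hPpos : 0 < Nat.card ↥P := by rw [hcardP]; exact Nat.mul_pos habpos hcommpos
  have hPfin : Finite ↥P := (Nat.card_pos_iff.mp hPpos).2
  refine ⟨hPfin, ?_⟩
  rw [hcardP]
  unfold Mbound
  rw [← hEdef, ← hLdef]
  refine Nat.mul_le_mul ?_ ?_
  · exact le_trans hable (Nat.pow_le_pow_right (le_of_lt hL) (le_trans hSFcard hYFcard))
  · exact le_trans hcommle (schurB_mono (Nat.pow_le_pow_right h1n hYFcard))

/-- Image of a conjugacy class under a surjective homomorphism. -/
lemma cc_map {Q : Type*} [Group Q] (π : G →* Q) (hπ : Surjective π) (x : G) :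
    cc (π x) = π '' cc x := by
  ext z
  constructor
  · rintro ⟨q, rfl⟩
    obtain ⟨g, rfl⟩ := hπ q
    exact ⟨g * x * g⁻¹, ⟨g, rfl⟩, by simp⟩
  · rintro ⟨y, ⟨g, rfl⟩, rfl⟩
    exact ⟨π g, by simp⟩

lemma card_cc_map_le {Q : Type*} [Group Q] (π : G →* Q) (hπ : Surjective π) (x : G)
    (h : (cc x).Finite) : Nat.card (cc (π x)) ≤ Nat.card (cc x) := by
  rw [cc_map π hπ x, Nat.card_coe_set_eq, Nat.card_coe_set_eq]
  exact Set.ncard_image_le h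

lemma cc_map_finite {Q : Type*} [Group Q] (π : G →* Q) (hπ : Surjective π) (x : G)
    (h : (cc x).Finite) : (cc (π x)).Finite := by
  rw [cc_map π hπ x]; exact h.image π

/-- Collapse: if two distinct conjugates have the same image, the class shrinks strictly. -/
lemma card_cc_map_lt {Q : Type*} [Group Q] (π : G →* Q) (hπ : Surjective π) (x : G)
    (h : (cc x).Finite) {g : G} (hg : π (g * x * g⁻¹) = π x) (hne : g * x * g⁻¹ ≠ x) :
    Nat.card (cc (π x)) < Nat.card (cc x) := by
  have hQfin : (cc (π x)).Finite := cc_map_finite π hπ x h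
  have hsub : cc (π x) ⊆ π '' (cc x \ {g * x * g⁻¹}) := by
    rw [cc_map π hπ x]
    rintro z ⟨y, hy, rfl⟩
    rcases eq_or_ne y (g * x * g⁻¹) with rfl | hyne
    · exact ⟨x, ⟨mem_cc_self x, by simp [hne.symm]⟩, hg.symm ▸ rfl⟩
    · exact ⟨y, Set.mem_diff_singleton.mpr ⟨hy, hyne⟩, rfl⟩
  calc Nat.card (cc (π x)) = (cc (π x)).ncard := Nat.card_coe_set_eq _
    _ ≤ (π '' (cc x \ {g * x * g⁻¹})).ncard :=
        Set.ncard_le_ncard hsub (Set.Finite.image _ h.diff)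
    _ ≤ (cc x \ {g * x * g⁻¹}).ncard := Set.ncard_image_le h.diff
    _ = (cc x).ncard - 1 := by
        have hmem : g * x * g⁻¹ ∈ cc x := ⟨g, rfl⟩
        rw [Set.ncard_diff_singleton_of_mem hmem]
    _ < (cc x).ncard := by
        have : 0 < (cc x).ncard := by
          rw [← Nat.card_coe_set_eq]; exact card_cc_pos x h
        omega
    _ = Nat.card (cc x) := (Nat.card_coe_set_eq _).symm

/-- The rigidity lemma: centralizers of undamaged maximal-class elements agree. -/
lemma rigidity (n : ℕ)
    (hn : ∀ x : G, (cc x).Finite ∧ Nat.card (cc x) ≤ n + 1)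
    (K : Subgroup G) (hKn : K.Normal) (a : G)
    (hK : ∀ g : G, a⁻¹ * (g * a * g⁻¹) ∈ K)
    (ha : Nat.card (cc a) = n + 1) (b : G) (hb : Nat.card (cc b) = n + 1)
    (hbK : ∀ g : G, b⁻¹ * (g * b * g⁻¹) ∈ K → g * b * g⁻¹ = b) :
    centralizer {a} = centralizer {b} := by
  haveI := hKn
  set π : G →* G ⧸ K := QuotientGroup.mk' K with hπdef
  have hπs : Surjective π := QuotientGroup.mk'_surjective K
  have hπa : ∀ g : G, π (g * a * g⁻¹) = π a := by
    intro g
    exact ((QuotientGroup.eq (s := K)).mpr (hK g)).symm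
  -- the class of b stays of full size modulo K
  set β : cc b → cc (π b) := fun y => ⟨π y.1, by
    obtain ⟨g, hg⟩ := y.2
    exact ⟨π g, by rw [← hg]; simp⟩⟩ with hβdef
  have hβinj : Injective β := by
    rintro ⟨y, hy⟩ ⟨y', hy'⟩ hyy'
    obtain ⟨g, hg⟩ := hy
    obtain ⟨h, hh⟩ := hy'
    have h1 : π y = π y' := congrArg Subtype.val hyy'
    have h2 : y'⁻¹ * y ∈ K := (QuotientGroup.eq (s := K)).mp h1.symm
    have h3 : b⁻¹ * ((h⁻¹ * g) * b * (h⁻¹ * g)⁻¹) ∈ K := by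
      have heq : b⁻¹ * ((h⁻¹ * g) * b * (h⁻¹ * g)⁻¹) = h⁻¹ * (y'⁻¹ * y) * (h⁻¹)⁻¹ := by
        rw [← hg, ← hh]; group
      rw [heq]
      exact hKn.conj_mem _ h2 h⁻¹
    have h4 : (h⁻¹ * g) * b * (h⁻¹ * g)⁻¹ = b := hbK _ h3
    apply Subtype.ext
    show y = y'
    rw [← hg, ← hh]
    calc g * b * g⁻¹ = h * (h⁻¹ * g * b * (h⁻¹ * g)⁻¹) * h⁻¹ := by group
      _ = h * b * h⁻¹ := by rw [h4]
  have hβsurj : Surjective β := by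
    rintro ⟨z, hz⟩
    obtain ⟨q, hq⟩ := hz
    obtain ⟨g, rfl⟩ := hπs q
    refine ⟨⟨g * b * g⁻¹, ⟨g, rfl⟩⟩, Subtype.ext ?_⟩
    show π (g * b * g⁻¹) = z
    rw [← hq]; simp
  have hccb : Nat.card (cc (π b)) = n + 1 := by
    rw [← Nat.card_eq_of_bijective β ⟨hβinj, hβsurj⟩, hb]
  -- the class of p := a * b
  set p := a * b with hpdef
  have hpval : ∀ g : G, π (g * p * g⁻¹) = π a * π (g * b * g⁻¹) := by
    intro g
    have heq : g * p * g⁻¹ = (g * a * g⁻¹) * (g * b * g⁻¹) := by rw [hpdef]; group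
    rw [heq, map_mul, hπa]
  set φ : cc p → cc (π b) := fun y => ⟨(π a)⁻¹ * π y.1, by
    obtain ⟨g, hg⟩ := y.2
    refine ⟨π g, ?_⟩
    rw [← hg, hpval g]
    simp⟩ with hφdef
  have hφsurj : Surjective φ := by
    rintro ⟨z, hz⟩
    obtain ⟨q, hq⟩ := hz
    obtain ⟨g, rfl⟩ := hπs q
    refine ⟨⟨g * p * g⁻¹, ⟨g, rfl⟩⟩, Subtype.ext ?_⟩
    show (π a)⁻¹ * π (g * p * g⁻¹) = z
    rw [hpval g, ← hq]
    simp
  haveI hfinp : Finite (cc p) := (hn p).1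
  have hcardp : Nat.card (cc p) = n + 1 := by
    have hge : Nat.card (cc (π b)) ≤ Nat.card (cc p) :=
      Nat.card_le_card_of_surjective φ hφsurj
    have hle' := (hn p).2
    omega
  have hφbij : Bijective φ := (Nat.bijective_iff_surjective_and_card φ).mpr
    ⟨hφsurj, by rw [hcardp, hccb]⟩
  -- conclude: centralizer of b is contained in centralizer of a
  have hle : centralizer {b} ≤ centralizer {a} := by
    intro g hg
    have hgb : b * g = g * b := Subgroup.mem_centralizer_iff.mp hg b (Set.mem_singleton _)
    have hgbg : g * b * g⁻¹ = b := by rw [← hgb]; group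
    set y₁ : cc p := ⟨g * p * g⁻¹, ⟨g, rfl⟩⟩
    set y₂ : cc p := ⟨p, mem_cc_self p⟩
    have hval : φ y₁ = φ y₂ := by
      apply Subtype.ext
      show (π a)⁻¹ * π (g * p * g⁻¹) = (π a)⁻¹ * π p
      rw [hpval g, hgbg]
      have : π p = π a * π b := by rw [hpdef, map_mul]
      rw [this]
    have hy : y₁ = y₂ := hφbij.1 hval
    have hgp : g * p * g⁻¹ = p := congrArg Subtype.val hy
    have hga : g * a * g⁻¹ = a := by
      have h0 : g * p * g⁻¹ = (g * a * g⁻¹) * (g * b * g⁻¹) := by rw [hpdef]; group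
      have h1 : (g * a * g⁻¹) * (g * b * g⁻¹) = a * b := by rw [← h0, hgp, hpdef]
      rw [hgbg] at h1
      exact mul_right_cancel h1
    rw [Subgroup.mem_centralizer_iff]
    intro h hh
    rw [Set.mem_singleton_iff] at hh
    subst hh
    exact (mul_inv_eq_iff_eq_mul.mp hga).symm
  -- equality via equal finite indices
  have hia : (centralizer {a}).index = n + 1 := by rw [index_centralizer_eq, ha]
  have hib : (centralizer {b}).index = n + 1 := by rw [index_centralizer_eq, hb]
  have hrel := Subgroup.relIndex_mul_index hle
  rw [hia, hib] at hrel
  have hrel1 : (centralizer {b}).relIndex (centralizer {a}) = 1 := by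
    exact Nat.eq_of_mul_eq_mul_right (Nat.succ_pos n) (hrel.trans (one_mul (n + 1)).symm)
  exact le_antisymm (Subgroup.relIndex_eq_one.mp hrel1) hle

/-- lift of the commutator bound along a quotient by a finite normal subgroup. -/
lemma commutator_lift_bound (N : Subgroup G) (hNn : N.Normal) (hNf : Finite N)
    (h : Finite (_root_.commutator (G ⧸ N))) :
    Finite (_root_.commutator G) ∧
      Nat.card (_root_.commutator G) ≤ Nat.card N * Nat.card (_root_.commutator (G ⧸ N)) := by
  haveI := hNn
  haveI := hNf
  haveI := h
  set π : G →* G ⧸ N := QuotientGroup.mk' N with hπdef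
  have hπs : Surjective π := QuotientGroup.mk'_surjective N
  have hmap : (_root_.commutator G).map π = _root_.commutator (G ⧸ N) := by
    unfold _root_.commutator
    rw [Subgroup.map_commutator]
    congr 1 <;> exact Subgroup.map_top_of_surjective _ hπs
  set ρ : ↥(_root_.commutator G) →* ↥((_root_.commutator G).map π) :=
    π.subgroupMap _ with hρdef
  have hρs : Surjective ρ := MonoidHom.subgroupMap_surjective π _
  have hkerinj : Injective (fun x : ρ.ker => (⟨x.1.1, by
      have hx1 : ρ x.1 = 1 := x.2
      have hx2 : π x.1.1 = 1 := congrArg Subtype.val hx1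
      exact (QuotientGroup.eq_one_iff _).mp hx2⟩ : ↥N)) :=
    fun x y hxy => by
      apply Subtype.ext
      apply Subtype.ext
      exact congrArg (fun z : ↥N => (z : G)) hxy
  have hkerfin : Finite ρ.ker := Finite.of_injective _ hkerinj
  haveI : Finite ↥((_root_.commutator G).map π) := by rw [hmap]; exact h
  haveI : Finite (↥(_root_.commutator G) ⧸ ρ.ker) :=
    Finite.of_equiv _ (QuotientGroup.quotientKerEquivOfSurjective ρ hρs).symm.toEquiv
  haveI := hkerfin
  have hfin : Finite ↥(_root_.commutator G) :=
    Finite.of_equiv _ (Subgroup.groupEquivQuotientProdSubgroup (s := ρ.ker)).symm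
  refine ⟨hfin, ?_⟩
  have hcard : Nat.card ↥(_root_.commutator G)
      = Nat.card (↥(_root_.commutator G) ⧸ ρ.ker) * Nat.card ρ.ker :=
    Subgroup.card_eq_card_quotient_mul_card_subgroup _
  have h1 : Nat.card (↥(_root_.commutator G) ⧸ ρ.ker)
      = Nat.card ↥(_root_.commutator (G ⧸ N)) := by
    rw [Nat.card_congr (QuotientGroup.quotientKerEquivOfSurjective ρ hρs).toEquiv, hmap]
  have h2 : Nat.card ρ.ker ≤ Nat.card N := Nat.card_le_card_of_injective _ hkerinj
  rw [hcard, h1, mul_comm]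
  exact Nat.mul_le_mul h2 (le_refl _)


/-- Conjugating an element permutes its conjugacy class. -/
lemma cc_conj (h b : G) : cc (h * b * h⁻¹) = (fun z => h * z * h⁻¹) '' cc b := by
  ext z
  constructor
  · rintro ⟨g, rfl⟩
    refine ⟨(h⁻¹ * g * h) * b * (h⁻¹ * g * h)⁻¹, ⟨h⁻¹ * g * h, rfl⟩, ?_⟩
    group
  · rintro ⟨w, ⟨g, rfl⟩, rfl⟩
    exact ⟨h * g * h⁻¹, by group⟩

lemma card_cc_conj (h b : G) : Nat.card (cc (h * b * h⁻¹)) = Nat.card (cc b) := by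
  rw [cc_conj, Nat.card_coe_set_eq, Nat.card_coe_set_eq]
  exact Set.ncard_image_of_injective _ (fun z w hzw => by
    have : h⁻¹ * (h * z * h⁻¹) * h = h⁻¹ * (h * w * h⁻¹) * h := by rw [hzw]
    group at this
    exact this)

lemma iUnion_ncard_le {ι : Type*} [Fintype ι] (f : ι → Set G) (hf : ∀ i, (f i).Finite)
    (m : ℕ) (hm : ∀ i, (f i).ncard ≤ m) :
    (⋃ i, f i).Finite ∧ (⋃ i, f i).ncard ≤ Fintype.card ι * m := by
  classical
  refine ⟨Set.finite_iUnion hf, ?_⟩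
  have heq : (⋃ i, f i) = ↑(Finset.univ.biUnion fun i => (hf i).toFinset) := by
    ext z
    simp [Set.mem_iUnion, Set.Finite.mem_toFinset]
  rw [heq, Set.ncard_coe_finset]
  refine le_trans (Finset.card_biUnion_le) ?_
  calc ∑ i : ι, (hf i).toFinset.card ≤ ∑ _i : ι, m := by
        refine Finset.sum_le_sum fun i _ => ?_
        rw [← Set.ncard_eq_toFinset_card (f i) (hf i)]
        exact hm i
    _ = Fintype.card ι * m := by rw [Finset.sum_const, Finset.card_univ, smul_eq_mul]

lemma abelian_of_card_cc_one (hcc : ∀ x : G, Nat.card (cc x) = 1) (x g : G) :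
    g * x * g⁻¹ = x := by
  have h1 : (cc x).ncard = 1 := by rw [← Nat.card_coe_set_eq, hcc]
  obtain ⟨w, hw⟩ := Set.ncard_eq_one.mp h1
  have h2 : g * x * g⁻¹ ∈ cc x := ⟨g, rfl⟩
  have h3 : x ∈ cc x := mem_cc_self x
  rw [hw] at h2 h3
  rw [Set.mem_singleton_iff] at h2 h3
  rw [h2, h3]

/-- The recursive global bound. -/
def B : ℕ → ℕ
  | 0 => 1
  | n + 1 => (max 1 (Mbound (n + 1) (2 * (n + 1) ^ 2))) * B n

lemma one_le_B (n : ℕ) : 1 ≤ B n := by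
  induction n with
  | zero => exact le_refl 1
  | succ n ih => exact Nat.one_le_iff_ne_zero.mpr (Nat.mul_ne_zero
      (Nat.one_le_iff_ne_zero.mp (le_max_left _ _)) (Nat.one_le_iff_ne_zero.mp ih))

lemma B_le_succ (n : ℕ) : B n ≤ B (n + 1) := by
  conv_lhs => rw [← one_mul (B n)]
  exact Nat.mul_le_mul_right _ (le_max_left _ _)

/-- Main theorem, by induction on the bound `n`. -/
theorem main : ∀ (n : ℕ) (G : Type*) [Group G],
    (∀ x : G, (cc x).Finite ∧ Nat.card (cc x) ≤ n) →
    0 < Nat.card (_root_.commutator G) ∧ Nat.card (_root_.commutator G) ≤ B n := by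
  intro n
  induction n with
  | zero =>
    intro G _ hn
    exact absurd (hn 1).2 (by have := card_cc_pos (1 : G) (hn 1).1; omega)
  | succ n ih =>
    intro G _ hn
    by_cases habel : ∀ x y : G, ⁅x, y⁆ = 1
    · -- abelian case
      have hbot : _root_.commutator G = ⊥ := by
        unfold _root_.commutator
        rw [eq_bot_iff]
        rw [Subgroup.commutator_le]
        intro g1 _ g2 _
        rw [habel g1 g2]
        exact one_mem ⊥
      constructor
      · rw [hbot]
        simp [Nat.card_eq_fintype_card]
      · rw [hbot]
        have h1 : Nat.card ↥(⊥ : Subgroup G) = 1 := by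
          simp [Nat.card_eq_fintype_card]
        rw [h1]
        exact one_le_B (n + 1)
    · -- non-abelian: n ≥ 1
      have hn1 : 1 ≤ n := by
        by_contra hcon
        push_neg at hcon
        interval_cases n
        · refine habel fun x y => ?_
          have hone : ∀ z : G, Nat.card (cc z) = 1 := fun z => by
            have := (hn z).2
            have := card_cc_pos z (hn z).1
            omega
          have := abelian_of_card_cc_one hone y x
          have hxy : x * y = y * x := by
            calc x * y = (x * y * x⁻¹) * x := by group
              _ = y * x := by rw [this]
          show x * y * x⁻¹ * y⁻¹ = 1
          rw [hxy]; group
      by_cases hex : ∃ a : G, Nat.card (cc a) = n + 1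
      · obtain ⟨a, ha⟩ := hex
        classical
        -- the set of class-differences of a, together with all their conjugates
        set X : Set G := {z | ∃ g h : G, h * (a⁻¹ * (g * a * g⁻¹)) * h⁻¹ = z} with hXdef
        have hXconj : ∀ y ∈ X, ∀ h' : G, h' * y * h'⁻¹ ∈ X := by
          rintro y ⟨g, h, rfl⟩ h'
          exact ⟨g, h' * h, by group⟩
        have hXcomm : ∀ y ∈ X, ∃ u v : G, ⁅u, v⁆ = y := by
          rintro y ⟨g, h, rfl⟩
          refine ⟨h * a⁻¹ * h⁻¹, h * g * h⁻¹, ?_⟩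
          show (h * a⁻¹ * h⁻¹) * (h * g * h⁻¹) * (h * a⁻¹ * h⁻¹)⁻¹ * (h * g * h⁻¹)⁻¹ = _
          group
        -- X is contained in a bounded union of classes
        haveI hccafin : Finite (cc a) := (hn a).1
        haveI : Fintype (cc a) := Fintype.ofFinite _
        have hXsub : X ⊆ ⋃ w : cc a, cc (a⁻¹ * w.1) := by
          rintro z ⟨g, h, rfl⟩
          refine Set.mem_iUnion.mpr ⟨⟨g * a * g⁻¹, ⟨g, rfl⟩⟩, ⟨h, rfl⟩⟩
        obtain ⟨hUfin, hUcard⟩ := iUnion_ncard_le (fun w : cc a => cc (a⁻¹ * w.1))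
          (fun w => (hn _).1) (n + 1) (fun w => by
            rw [← Nat.card_coe_set_eq]; exact (hn _).2)
        have hcardcca : Fintype.card (cc a) = n + 1 := by
          rw [← Nat.card_eq_fintype_card, ha]
        have hXfin : X.Finite := hUfin.subset hXsub
        have hXcard : Nat.card X ≤ (n + 1) * (n + 1) := by
          rw [Nat.card_coe_set_eq]
          refine le_trans (Set.ncard_le_ncard hXsub hUfin) ?_
          rw [hcardcca] at hUcard
          exact hUcard
        -- K := the normal subgroup generated by X
        obtain ⟨hKnormal, hKfin, hKcard⟩ := normal_closure_bound (n + 1) ((n + 1) * (n + 1))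
          hn X hXfin hXcard hXconj hXcomm
        set K := closure X with hKdef
        have hKa : ∀ g : G, a⁻¹ * (g * a * g⁻¹) ∈ K :=
          fun g => subset_closure ⟨g, 1, by group⟩
        -- undamaged elements of maximal class size
        set T : Set G := {b | Nat.card (cc b) = n + 1 ∧
          ∀ g : G, b⁻¹ * (g * b * g⁻¹) ∈ K → g * b * g⁻¹ = b} with hTdef
        have hTcent : ∀ b ∈ T, centralizer {a} = centralizer {b} :=
          fun b hb => rigidity n hn K hKnormal a hKa ha b hb.1 hb.2
        have hTconj : ∀ b ∈ T, ∀ h : G, h * b * h⁻¹ ∈ T := by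
          rintro b ⟨hb1, hb2⟩ h
          constructor
          · rw [card_cc_conj, hb1]
          · intro g hg
            have heq : (h * b * h⁻¹)⁻¹ * (g * (h * b * h⁻¹) * g⁻¹)
                = h * (b⁻¹ * ((h⁻¹ * g * h) * b * (h⁻¹ * g * h)⁻¹)) * h⁻¹ := by group
            rw [heq] at hg
            have hg2 : b⁻¹ * ((h⁻¹ * g * h) * b * (h⁻¹ * g * h)⁻¹) ∈ K := by
              have := hKnormal.conj_mem _ hg h⁻¹
              have heq2 : h⁻¹ * (h * (b⁻¹ * ((h⁻¹ * g * h) * b * (h⁻¹ * g * h)⁻¹)) * h⁻¹) * h⁻¹⁻¹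
                  = b⁻¹ * ((h⁻¹ * g * h) * b * (h⁻¹ * g * h)⁻¹) := by group
              rwa [heq2] at this
            have hg3 := hb2 _ hg2
            calc g * (h * b * h⁻¹) * g⁻¹
                = h * ((h⁻¹ * g * h) * b * (h⁻¹ * g * h)⁻¹) * h⁻¹ := by group
              _ = h * b * h⁻¹ := by rw [hg3]
        -- the difference set of all undamaged elements
        set Ψ : Set G := {z | ∃ b ∈ T, ∃ g : G, b⁻¹ * (g * b * g⁻¹) = z} with hΨdef
        have hΨconj : ∀ y ∈ Ψ, ∀ h : G, h * y * h⁻¹ ∈ Ψ := by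
          rintro y ⟨b, hb, g, rfl⟩ h
          exact ⟨h * b * h⁻¹, hTconj b hb h, h * g * h⁻¹, by group⟩
        have hΨcomm : ∀ y ∈ Ψ, ∃ u v : G, ⁅u, v⁆ = y := by
          rintro y ⟨b, hb, g, rfl⟩
          exact ⟨b⁻¹, g, by show b⁻¹ * g * b⁻¹⁻¹ * g⁻¹ = _; group⟩
        -- Ψ is bounded: only one difference map per coset of the common centralizer
        set C := centralizer {a} with hCdef
        haveI hCfi : C.FiniteIndex := finiteIndex_centralizer a (hn a).1
        haveI : Finite (G ⧸ C) := C.finite_quotient_of_finiteIndex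
        haveI : Fintype (G ⧸ C) := Fintype.ofFinite _
        have hCcard : Fintype.card (G ⧸ C) = n + 1 := by
          rw [← Nat.card_eq_fintype_card]
          show C.index = n + 1
          rw [hCdef, index_centralizer_eq, ha]
        have hΨsub : Ψ ⊆ ⋃ q : G ⧸ C, (fun w => w * (q.out)⁻¹) '' cc q.out := by
          rintro z ⟨b, hb, g, rfl⟩
          refine Set.mem_iUnion.mpr ⟨(↑g : G ⧸ C), ?_⟩
          set t := (↑g : G ⧸ C).out with htdef
          have htg : t⁻¹ * g ∈ C := by
            rw [← QuotientGroup.eq]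
            exact Quotient.out_eq _
          have htgb : (t⁻¹ * g) * b * (t⁻¹ * g)⁻¹ = b := by
            have hcb : b * (t⁻¹ * g) = (t⁻¹ * g) * b :=
              Subgroup.mem_centralizer_iff.mp ((hTcent b hb) ▸ htg) b (Set.mem_singleton _)
            rw [← hcb]; group
          have hgb : g * b * g⁻¹ = t * b * t⁻¹ := by
            calc g * b * g⁻¹ = t * ((t⁻¹ * g) * b * (t⁻¹ * g)⁻¹) * t⁻¹ := by group
              _ = t * b * t⁻¹ := by rw [htgb]
          refine ⟨b⁻¹ * t * b⁻¹⁻¹, ⟨b⁻¹, rfl⟩, ?_⟩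
          rw [hgb]; group
        obtain ⟨hVfin, hVcard⟩ := iUnion_ncard_le
          (fun q : G ⧸ C => (fun w => w * (q.out)⁻¹) '' cc q.out)
          (fun q => ((hn _).1).image _) (n + 1) (fun q => by
            refine le_trans (le_of_eq (Set.ncard_image_of_injective _
              (mul_left_injective _))) ?_
            rw [← Nat.card_coe_set_eq]; exact (hn _).2)
        have hΨfin : Ψ.Finite := hVfin.subset hΨsub
        have hΨcard : Nat.card Ψ ≤ (n + 1) * (n + 1) := by
          rw [Nat.card_coe_set_eq]
          refine le_trans (Set.ncard_le_ncard hΨsub hVfin) ?_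
          rw [hCcard] at hVcard
          exact hVcard
        -- the big quotient
        have hXΨconj : ∀ y ∈ X ∪ Ψ, ∀ h : G, h * y * h⁻¹ ∈ X ∪ Ψ := by
          rintro y (hy | hy) h
          · exact Or.inl (hXconj y hy h)
          · exact Or.inr (hΨconj y hy h)
        have hXΨcomm : ∀ y ∈ X ∪ Ψ, ∃ u v : G, ⁅u, v⁆ = y := by
          rintro y (hy | hy)
          · exact hXcomm y hy
          · exact hΨcomm y hy
        have hXΨfin : (X ∪ Ψ).Finite := hXfin.union hΨfin
        have hXΨcard : Nat.card ↥(X ∪ Ψ) ≤ 2 * (n + 1) ^ 2 := by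
          rw [Nat.card_coe_set_eq]
          refine le_trans (Set.ncard_union_le X Ψ) ?_
          rw [Nat.card_coe_set_eq] at hXcard hΨcard
          nlinarith
        obtain ⟨hNnormal, hNfin, hNcard⟩ := normal_closure_bound (n + 1) (2 * (n + 1) ^ 2)
          hn (X ∪ Ψ) hXΨfin hXΨcard hXΨconj hXΨcomm
        set N := closure (X ∪ Ψ) with hNdef
        haveI := hNnormal
        set π : G →* G ⧸ N := QuotientGroup.mk' N with hπdef
        have hπs : Surjective π := QuotientGroup.mk'_surjective N
        have hKN : K ≤ N := closure_mono Set.subset_union_left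
        -- classes in the quotient are of size at most n
        have hq : ∀ xq : G ⧸ N, (cc xq).Finite ∧ Nat.card (cc xq) ≤ n := by
          intro xq
          obtain ⟨x, rfl⟩ := hπs xq
          refine ⟨cc_map_finite π hπs x (hn x).1, ?_⟩
          by_cases hxT : x ∈ T
          · -- x becomes central in the quotient
            have hcent : cc (π x) = {π x} := by
              ext z
              constructor
              · rintro ⟨q, rfl⟩
                obtain ⟨g, rfl⟩ := hπs q
                have hmem : x⁻¹ * (g * x * g⁻¹) ∈ N :=
                  subset_closure (Or.inr ⟨x, hxT, g, rfl⟩)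
                have heq2 : π (g * x * g⁻¹) = π x := ((QuotientGroup.eq (s := N)).mpr hmem).symm
                show π g * π x * (π g)⁻¹ = π x
                rw [← map_inv, ← map_mul, ← map_mul]
                exact heq2
              · rintro rfl
                exact mem_cc_self _
            rw [hcent]
            simp only [Nat.card_unique, Nat.card_coe_set_eq, Set.ncard_singleton]
            omega
          · by_cases hxn : Nat.card (cc x) ≤ n
            · exact le_trans (card_cc_map_le π hπs x (hn x).1) hxn
            · have hxcard : Nat.card (cc x) = n + 1 := by
                have := (hn x).2; omega
              have hxT2 : ¬(∀ g : G, x⁻¹ * (g * x * g⁻¹) ∈ K → g * x * g⁻¹ = x) := by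
                intro hcon
                exact hxT ⟨hxcard, hcon⟩
              push_neg at hxT2
              obtain ⟨g, hgK, hgne⟩ := hxT2
              have hgN : x⁻¹ * (g * x * g⁻¹) ∈ N := hKN hgK
              have heq2 : π (g * x * g⁻¹) = π x := ((QuotientGroup.eq (s := N)).mpr hgN).symm
              have := card_cc_map_lt π hπs x (hn x).1 heq2 hgne
              omega
        -- apply the induction hypothesis to the quotient and lift
        obtain ⟨hqpos, hqle⟩ := ih (G ⧸ N) hq
        have hqfin : Finite ↥(_root_.commutator (G ⧸ N)) := (Nat.card_pos_iff.mp hqpos).2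
        obtain ⟨hGfin, hGle⟩ := commutator_lift_bound N hNnormal hNfin hqfin
        constructor
        · exact Nat.card_pos_iff.mpr ⟨⟨1⟩, hGfin⟩
        · refine le_trans hGle ?_
          show _ ≤ B (n + 1)
          have hstep : B (n + 1) = (max 1 (Mbound (n + 1) (2 * (n + 1) ^ 2))) * B n := rfl
          rw [hstep]
          exact Nat.mul_le_mul (le_trans hNcard (le_max_right _ _)) hqle
      · -- no class of maximal size: use the induction hypothesis directly
        have hn' : ∀ x : G, (cc x).Finite ∧ Nat.card (cc x) ≤ n := by
          intro x
          refine ⟨(hn x).1, ?_⟩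
          have h1 := (hn x).2
          have h2 : Nat.card (cc x) ≠ n + 1 := fun hcon => hex ⟨x, hcon⟩
          omega
        obtain ⟨hpos, hle⟩ := ih G hn'
        exact ⟨hpos, le_trans hle (B_le_succ n)⟩

end BFC

/-- B. H. Neumann's theorem: a BFC-group with classes of size at most `m` has
derived subgroup of `m`-bounded finite order. -/
theorem stmt_1 :
    ∃ f : ℕ → ℕ, ∀ (m : ℕ) (G : Type*) [Group G],
      (∀ x : G, ({y : G | ∃ g : G, g * x * g⁻¹ = y}).Finite ∧
        Nat.card {y : G | ∃ g : G, g * x * g⁻¹ = y} ≤ m) →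
      0 < Nat.card (commutator G) ∧ Nat.card (commutator G) ≤ f m := by
  exact ⟨BFC.B, fun m G _ h => BFC.main m G h⟩
end

section
/- Let w be a group word and G a group such that for every w-value x ∈ G_w the centralizer C_{w(G)}(x) has index at most m in the verbal subgroup w(G). Then for every w-value x, the subgroup [w(G), x] is finite of order bounded by a function of m only. -/
open Subgroup

open scoped commutatorElement

section Helpers
variable {G : Type*} [Group G]

private lemma comm_center_left (a b z : G) (hz : z ∈ Subgroup.center G) :
    ⁅a * z, b⁆ = ⁅a, b⁆ := by
  have hc : ∀ g : G, g * z = z * g := fun g => Subgroup.mem_center_iff.mp hz g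
  simp only [commutatorElement_def, mul_inv_rev]
  calc a * z * b * (z⁻¹ * a⁻¹) * b⁻¹ = a * (z * b * z⁻¹) * a⁻¹ * b⁻¹ := by group
    _ = a * b * a⁻¹ * b⁻¹ := by rw [show z * b = b * z from (hc b).symm]; group

private lemma comm_center_right (a b z : G) (hz : z ∈ Subgroup.center G) :
    ⁅a, b * z⁆ = ⁅a, b⁆ := by
  have hc : ∀ g : G, g * z = z * g := fun g => Subgroup.mem_center_iff.mp hz g
  simp only [commutatorElement_def, mul_inv_rev]
  calc a * (b * z) * a⁻¹ * (z⁻¹ * b⁻¹) = a * b * (z * a⁻¹ * z⁻¹) * b⁻¹ := by group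
    _ = a * b * a⁻¹ * b⁻¹ := by rw [show z * a⁻¹ = a⁻¹ * z from (hc a⁻¹).symm]; group

lemma commutatorSet_bound {K : Type*} [Group K] (h : (center K).index ≠ 0) :
    Finite (commutatorSet K) ∧ Nat.card (commutatorSet K) ≤ (center K).index ^ 2 := by
  have hfin : Finite (K ⧸ center K) := by
    refine (Nat.card_ne_zero.mp ?_).2
    exact h
  -- the lifted commutator map
  have hwd : ∀ (a b c d : K), (QuotientGroup.leftRel (center K)) a c →
      (QuotientGroup.leftRel (center K)) b d → ⁅a, b⁆ = ⁅c, d⁆ := by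
    intro a b c d hac hbd
    rw [QuotientGroup.leftRel_apply] at hac hbd
    have h1 : c = a * (a⁻¹ * c) := by group
    have h2 : d = b * (b⁻¹ * d) := by group
    rw [h1, h2, comm_center_left _ _ _ hac, comm_center_right _ _ _ hbd]
  let f : K ⧸ center K → K ⧸ center K → K :=
    Quotient.lift₂ (fun a b => ⁅a, b⁆) hwd
  have hmem : ∀ p : (K ⧸ center K) × (K ⧸ center K), f p.1 p.2 ∈ commutatorSet K := by
    rintro ⟨p1, p2⟩
    induction p1, p2 using Quotient.inductionOn₂ with
    | h a b => exact ⟨a, b, rfl⟩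
  let σ : (K ⧸ center K) × (K ⧸ center K) → commutatorSet K :=
    fun p => ⟨f p.1 p.2, hmem p⟩
  have hsurj : Function.Surjective σ := by
    rintro ⟨g, a, b, rfl⟩
    refine ⟨(QuotientGroup.mk a, QuotientGroup.mk b), rfl⟩
  have hfin2 : Finite (commutatorSet K) := Finite.of_surjective σ hsurj
  refine ⟨hfin2, ?_⟩
  calc Nat.card (commutatorSet K) ≤ Nat.card ((K ⧸ center K) × (K ⧸ center K)) :=
        Nat.card_le_card_of_surjective σ hsurj
    _ = (center K).index ^ 2 := by
        rw [Nat.card_prod]; rw [sq]; rfl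

end Helpers

lemma ccb_mono {a b : ℕ} (hab : a ≤ b) :
    Subgroup.cardCommutatorBound a ≤ Subgroup.cardCommutatorBound b := by
  rcases Nat.eq_zero_or_pos b with hb | hb
  · subst hb; interval_cases a; exact le_rfl
  unfold Subgroup.cardCommutatorBound
  have h1 : a ^ (2 * a) ≤ b ^ (2 * b) :=
    (Nat.pow_le_pow_left hab _).trans (Nat.pow_le_pow_right hb (by omega))
  have h2 : a ^ (2 * a + 1) + 1 ≤ b ^ (2 * b + 1) + 1 := by
    have := (Nat.pow_le_pow_left hab (2 * a + 1)).trans (Nat.pow_le_pow_right hb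
      (show 2 * a + 1 ≤ 2 * b + 1 by omega))
    omega
  calc (a ^ (2 * a)) ^ (a ^ (2 * a + 1) + 1) ≤ (b ^ (2 * b)) ^ (a ^ (2 * a + 1) + 1) :=
        Nat.pow_le_pow_left h1 _
    _ ≤ (b ^ (2 * b)) ^ (b ^ (2 * b + 1) + 1) :=
        Nat.pow_le_pow_right (Nat.one_le_pow _ _ hb) h2

section Helpers2
variable {G : Type*} [Group G]

lemma schur_aux (H : Subgroup G) (V : Set G) (m r : ℕ) (hm1 : 1 ≤ m)
    (hVfin : V.Finite) (hVcard : V.ncard ≤ r) (hVH : V ⊆ (H : Set G))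
    (hrel : ∀ v ∈ V, (centralizer {v}).relIndex H ≠ 0 ∧ (centralizer {v}).relIndex H ≤ m) :
    Finite (commutator ↥(Subgroup.closure V)) ∧
      Nat.card (commutator ↥(Subgroup.closure V)) ≤
        Subgroup.cardCommutatorBound ((m ^ r) ^ 2) := by
  set P : Subgroup G := Subgroup.closure V with hP
  have hPH : P ≤ H := (Subgroup.closure_le H).mpr hVH
  haveI : Fintype ↥hVfin.toFinset := FinsetCoe.fintype _
  set Z : Subgroup G := ⨅ v : ↥hVfin.toFinset, centralizer {(v : G)} with hZ
  have hmemV : ∀ v : ↥hVfin.toFinset, (v : G) ∈ V := fun v => hVfin.mem_toFinset.mp v.2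
  have h1 : Z.relIndex H ≠ 0 :=
    relIndex_iInf_ne_zero fun v => (hrel v (hmemV v)).1
  have h2 : Z.relIndex H ≤ m ^ r := by
    refine (relIndex_iInf_le _).trans ?_
    calc ∏ v : ↥hVfin.toFinset, (centralizer {(v : G)}).relIndex H
        ≤ ∏ _v : ↥hVfin.toFinset, m :=
          Finset.prod_le_prod' fun v _ => (hrel v (hmemV v)).2
      _ = m ^ Fintype.card ↥hVfin.toFinset := by
          rw [Finset.prod_const, Finset.card_univ]
      _ ≤ m ^ r := by
          refine Nat.pow_le_pow_right hm1 ?_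
          rw [Fintype.card_coe, ← Set.ncard_eq_toFinset_card V hVfin] at *
          exact hVcard
  have h4 : Z.relIndex P ≠ 0 := fun h0 => h1 (relIndex_eq_zero_of_le_right hPH h0)
  have h3 : Z.relIndex P ≤ m ^ r := (relIndex_le_of_le_right hPH h1).trans h2
  have h5 : Z.subgroupOf P ≤ center ↥P := by
    rintro ⟨z, hzP⟩ hz
    rw [Subgroup.mem_subgroupOf] at hz
    rw [Subgroup.mem_center_iff]
    intro g
    have hgc : (g : G) ∈ centralizer {z} := by
      have hPle : P ≤ centralizer {z} := by
        rw [hP, Subgroup.closure_le]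
        intro v hv
        rw [SetLike.mem_coe, Subgroup.mem_centralizer_iff]
        intro w hw
        simp only [Set.mem_singleton_iff] at hw
        rw [hw]
        have : z ∈ centralizer {v} := by
          have := Subgroup.mem_iInf.mp hz ⟨v, hVfin.mem_toFinset.mpr hv⟩
          simpa using this
        have := Subgroup.mem_centralizer_iff.mp this v (Set.mem_singleton v)
        exact this.symm
      exact hPle g.2
    have := Subgroup.mem_centralizer_iff.mp hgc z (Set.mem_singleton z)
    exact Subtype.ext this.symm
  have h6d : (center ↥P).index ∣ Z.relIndex P := Subgroup.index_dvd_of_le h5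
  have h6 : (center ↥P).index ≠ 0 := fun h0 => h4 (Nat.eq_zero_of_zero_dvd (h0 ▸ h6d))
  have h7 : (center ↥P).index ≤ m ^ r :=
    (Nat.le_of_dvd (Nat.pos_of_ne_zero h4) h6d).trans h3
  obtain ⟨hfinset, hcardset⟩ := commutatorSet_bound h6
  haveI := hfinset
  refine ⟨inferInstance, ?_⟩
  refine (Subgroup.card_commutator_le_of_finite_commutatorSet ↥P).trans ?_
  refine ccb_mono ?_
  exact hcardset.trans (Nat.pow_le_pow_left h7 2)

end Helpers2

section Helpers3
variable {G : Type*} [Group G]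

/-- The set of conjugates of `x` by elements of `H`. -/
def conjSet (H : Subgroup G) (x : G) : Set G := (fun h => h * x * h⁻¹) '' (H : Set G)

lemma mem_conjSet_self (H : Subgroup G) (x : G) : x ∈ conjSet H x :=
  ⟨1, H.one_mem, by group⟩

lemma conjSet_subset (H : Subgroup G) {x : G} (hx : x ∈ H) : conjSet H x ⊆ (H : Set G) := by
  rintro - ⟨h, hh, rfl⟩
  exact mul_mem (mul_mem hh hx) (inv_mem hh)

lemma conjSet_stable (H : Subgroup G) (x : G) {a : G} (ha : a ∈ H) {t : G}
    (ht : t ∈ conjSet H x) : a * t * a⁻¹ ∈ conjSet H x := by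
  obtain ⟨h, hh, rfl⟩ := ht
  exact ⟨a * h, mul_mem ha hh, by group⟩

lemma conjSet_finite_card (H : Subgroup G) (x : G) {m : ℕ}
    (h0 : (centralizer {x}).relIndex H ≠ 0) (hm : (centralizer {x}).relIndex H ≤ m) :
    (conjSet H x).Finite ∧ (conjSet H x).ncard ≤ m := by
  set Q := ↥H ⧸ (centralizer {x}).subgroupOf H with hQ
  have hfinQ : Finite Q := by
    have : Nat.card Q ≠ 0 := h0
    exact (Nat.card_ne_zero.mp this).2
  have hwd : ∀ a b : ↥H, (QuotientGroup.leftRel ((centralizer {x}).subgroupOf H)) a b →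
      (a : G) * x * (a : G)⁻¹ = (b : G) * x * (b : G)⁻¹ := by
    intro a b hab
    rw [QuotientGroup.leftRel_apply, Subgroup.mem_subgroupOf] at hab
    have hc := Subgroup.mem_centralizer_iff.mp hab x (Set.mem_singleton x)
    -- hc : x * ((a⁻¹ * b : ↥H) : G) = ((a⁻¹ * b : ↥H) : G) * x
    have hc' : x * ((a : G)⁻¹ * b) = ((a : G)⁻¹ * b) * x := by
      simpa using hc
    calc (a : G) * x * (a : G)⁻¹
        = (a : G) * (x * ((a : G)⁻¹ * (b : G))) * (b : G)⁻¹ := by group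
      _ = (a : G) * (((a : G)⁻¹ * (b : G)) * x) * (b : G)⁻¹ := by rw [hc']
      _ = (b : G) * x * (b : G)⁻¹ := by group
  let cmap : Q → G := Quotient.lift (fun h : ↥H => (h : G) * x * (h : G)⁻¹) hwd
  have hrange : conjSet H x = Set.range cmap := by
    ext g
    constructor
    · rintro ⟨h, hh, rfl⟩
      exact ⟨QuotientGroup.mk ⟨h, hh⟩, rfl⟩
    · rintro ⟨q, rfl⟩
      induction q using Quotient.inductionOn with
      | h a => exact ⟨(a : G), a.2, rfl⟩
  rw [hrange]
  refine ⟨Set.finite_range cmap, ?_⟩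
  rw [← Nat.card_coe_set_eq]
  refine le_trans (Nat.card_le_card_of_surjective
    (Set.rangeFactorization cmap) Set.rangeFactorization_surjective) ?_
  exact hm

/-- Conjugation as a homomorphism of a stable subgroup. -/
def conjHom (N : Subgroup G) (a : G) (hstab : ∀ g ∈ N, a * g * a⁻¹ ∈ N) : ↥N →* ↥N where
  toFun n := ⟨a * (n : G) * a⁻¹, hstab n n.2⟩
  map_one' := by ext; simp
  map_mul' n₁ n₂ := by ext; push_cast; group

@[simp] lemma conjHom_coe (N : Subgroup G) (a : G) (hstab : ∀ g ∈ N, a * g * a⁻¹ ∈ N)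
    (n : ↥N) : ((conjHom N a hstab n : ↥N) : G) = a * (n : G) * a⁻¹ := rfl

lemma card_closure_le_of_torsion {A : Type*} [CommGroup A] {W : Set A} (hfin : W.Finite)
    {L : ℕ} (hL : 0 < L) (htor : ∀ w ∈ W, w ^ L = 1) :
    Finite ↥(Subgroup.closure W) ∧ Nat.card ↥(Subgroup.closure W) ≤ L ^ W.ncard := by
  haveI : NeZero L := ⟨hL.ne'⟩
  classical
  haveI : Fintype ↥hfin.toFinset := FinsetCoe.fintype _
  have htor' : ∀ w : ↥hfin.toFinset, (w : A) ^ L = 1 :=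
    fun w => htor w (hfin.mem_toFinset.mp w.2)
  let Φ : (↥hfin.toFinset → Multiplicative (ZMod L)) →* A :=
    MonoidHom.mk' (fun f => ∏ w : ↥hfin.toFinset, (w : A) ^ ((f w).toAdd.val))
      (by
        intro f g
        rw [← Finset.prod_mul_distrib]
        refine Finset.prod_congr rfl ?_
        intro w _
        have : ((f * g) w).toAdd = (f w).toAdd + (g w).toAdd := rfl
        rw [this, ZMod.val_add, ← pow_eq_pow_mod _ (htor' w), pow_add])
  have hWle : Subgroup.closure W ≤ Φ.range := by
    rw [Subgroup.closure_le]
    intro w hw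
    rw [SetLike.mem_coe]
    refine ⟨fun v => if v = ⟨w, hfin.mem_toFinset.mpr hw⟩ then
      Multiplicative.ofAdd (1 : ZMod L) else 1, ?_⟩
    have : ∀ v : ↥hfin.toFinset,
        (v : A) ^ ((if v = (⟨w, hfin.mem_toFinset.mpr hw⟩ : ↥hfin.toFinset) then
          Multiplicative.ofAdd (1 : ZMod L) else 1).toAdd.val)
        = if v = ⟨w, hfin.mem_toFinset.mpr hw⟩ then w ^ ((1 : ZMod L).val) else 1 := by
      intro v
      split_ifs with h
      · subst h; rfl
      · simp
    show (∏ v : ↥hfin.toFinset, _) = w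
    rw [Finset.prod_congr rfl fun v _ => this v, Finset.prod_ite_eq' Finset.univ]
    simp only [Finset.mem_univ, if_true]
    rw [ZMod.val_one_eq_one_mod, ← pow_eq_pow_mod _ (htor w hw), pow_one]
  have hfinR : Finite ↥Φ.range := by
    have : Finite (↥hfin.toFinset → Multiplicative (ZMod L)) := by infer_instance
    exact Finite.Set.finite_range Φ
  have hfinC : Finite ↥(Subgroup.closure W) :=
    Finite.of_injective (Set.inclusion hWle) (Set.inclusion_injective hWle)
  refine ⟨hfinC, ?_⟩
  calc Nat.card ↥(Subgroup.closure W) ≤ Nat.card ↥Φ.range :=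
        Nat.card_le_card_of_injective (Set.inclusion hWle) (Set.inclusion_injective hWle)
    _ ≤ Nat.card (↥hfin.toFinset → Multiplicative (ZMod L)) :=
        Nat.card_le_card_of_surjective Φ.rangeRestrict Φ.rangeRestrict_surjective
    _ = L ^ W.ncard := by
        rw [Nat.card_fun, Nat.card_eq_fintype_card (α := ↥hfin.toFinset), Fintype.card_coe,
          ← Set.ncard_eq_toFinset_card W hfin]
        congr 1
        · show Nat.card (Multiplicative (ZMod L)) = L
          rw [Nat.card_congr Multiplicative.toAdd, Nat.card_zmod]

end Helpers3

/-- The set of values of the word `w` in the group `G`. -/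
def wValues {n : ℕ} (w : FreeGroup (Fin n)) (G : Type*) [Group G] : Set G :=
  {x | ∃ g : Fin n → G, FreeGroup.lift g w = x}

/-- The verbal subgroup of `G` determined by `w`. -/
def verbal {n : ℕ} (w : FreeGroup (Fin n)) (G : Type*) [Group G] : Subgroup G :=
  Subgroup.closure (wValues w G)

open scoped commutatorElement

/-- Lemma 2.3: if every `w`-value has centralizer of index at most `m` in `w(G)`,
then `[w(G), x]` has `m`-bounded finite order for every `w`-value `x`. -/
theorem stmt_3 :
    ∃ f : ℕ → ℕ, ∀ (k m : ℕ) (G : Type*) [Group G] (w : FreeGroup (Fin k)),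
      (∀ x ∈ wValues w G,
        0 < (Subgroup.centralizer {x}).relIndex (verbal w G) ∧
          (Subgroup.centralizer {x}).relIndex (verbal w G) ≤ m) →
      ∀ x ∈ wValues w G,
        0 < Nat.card (Subgroup.closure {y : G | ∃ h ∈ verbal w G, ⁅h, x⁆ = y}) ∧
          Nat.card (Subgroup.closure {y : G | ∃ h ∈ verbal w G, ⁅h, x⁆ = y}) ≤ f m := by
  classical
  refine ⟨fun m => (Nat.factorial (Subgroup.cardCommutatorBound ((m ^ (2*m)) ^ 2))) ^ (m*m) *
      Subgroup.cardCommutatorBound ((m ^ (2*m)) ^ 2), ?_⟩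
  intro k m G _ w hyp x hx
  set Y : Set G := wValues w G with hY
  set H : Subgroup G := verbal w G with hH
  have hm1 : 1 ≤ m := le_trans (hyp x hx).1 (hyp x hx).2
  -- conjugates of w-values are w-values
  have hconj : ∀ (g y : G), y ∈ Y → g * y * g⁻¹ ∈ Y := by
    intro g y hy
    obtain ⟨gs, rfl⟩ := hy
    refine ⟨fun i => g * gs i * g⁻¹, ?_⟩
    have he : FreeGroup.lift (fun i => g * gs i * g⁻¹)
        = (MulAut.conj g).toMonoidHom.comp (FreeGroup.lift gs) := by
      ext i
      simp [MulAut.conj_apply]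
    rw [he]
    simp [MulAut.conj_apply]
  have hxH : x ∈ H := Subgroup.subset_closure hx
  have hrel : ∀ v ∈ Y, (centralizer {v}).relIndex H ≠ 0 ∧ (centralizer {v}).relIndex H ≤ m :=
    fun v hv => ⟨(hyp v hv).1.ne', (hyp v hv).2⟩
  have hclass : ∀ y ∈ Y, (conjSet H y).Finite ∧ (conjSet H y).ncard ≤ m :=
    fun y hy => conjSet_finite_card H y (hrel y hy).1 (hrel y hy).2
  have hclassY : ∀ y ∈ Y, conjSet H y ⊆ Y := by
    rintro y hy - ⟨h, hh, rfl⟩; exact hconj h y hy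
  set c : ℕ := Subgroup.cardCommutatorBound ((m ^ (2*m)) ^ 2) with hc
  set L : ℕ := c.factorial with hL
  have hLpos : 0 < L := Nat.factorial_pos c
  -- Schur bound for a pair of w-values
  have hpair : ∀ y ∈ Y, ∀ z ∈ Y,
      Finite (commutator ↥(Subgroup.closure (conjSet H y ∪ conjSet H z))) ∧
      Nat.card (commutator ↥(Subgroup.closure (conjSet H y ∪ conjSet H z))) ≤ c := by
    intro y hy z hz
    refine schur_aux H (conjSet H y ∪ conjSet H z) m (2*m) hm1
      ((hclass y hy).1.union (hclass z hz).1)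
      (le_trans (Set.ncard_union_le _ _)
        (by have h1 := (hclass y hy).2; have h2 := (hclass z hz).2; omega))
      (Set.union_subset (conjSet_subset H (Subgroup.subset_closure hy))
        (conjSet_subset H (Subgroup.subset_closure hz)))
      ?_
    rintro v (hv | hv)
    · exact hrel v (hclassY y hy hv)
    · exact hrel v (hclassY z hz hv)
  -- torsion (in `G`) of commutators of two w-values
  have horder : ∀ y ∈ Y, (y * x * y⁻¹ * x⁻¹) ^ L = 1 := by
    intro y hy
    set P : Subgroup G := Subgroup.closure (conjSet H x ∪ conjSet H y) with hPd
    obtain ⟨hPfin, hPcard⟩ := hpair x hx y hy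
    have hxP : x ∈ P := Subgroup.subset_closure (Or.inl (mem_conjSet_self H x))
    have hyP : y ∈ P := Subgroup.subset_closure (Or.inr (mem_conjSet_self H y))
    have hmem : ⁅(⟨y, hyP⟩ : ↥P), (⟨x, hxP⟩ : ↥P)⁆ ∈ commutator ↥P :=
      Subgroup.commutator_mem_commutator (Subgroup.mem_top _) (Subgroup.mem_top _)
    have hdvd : orderOf (⁅(⟨y, hyP⟩ : ↥P), (⟨x, hxP⟩ : ↥P)⁆) ∣ Nat.card (commutator ↥P) :=
      Subgroup.orderOf_dvd_natCard _ hmem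
    have hcardpos : Nat.card (commutator ↥P) ≠ 0 := by
      haveI := hPfin
      exact Nat.card_pos.ne'
    have h1 : orderOf (⁅(⟨y, hyP⟩ : ↥P), (⟨x, hxP⟩ : ↥P)⁆) ∣ L := by
      refine Nat.dvd_factorial (Nat.pos_of_ne_zero fun h0 => hcardpos ?_) ?_
      · rw [h0] at hdvd; exact Nat.eq_zero_of_zero_dvd hdvd
      · exact le_trans (Nat.le_of_dvd (Nat.pos_of_ne_zero hcardpos) hdvd) hPcard
    have h2 : (⁅(⟨y, hyP⟩ : ↥P), (⟨x, hxP⟩ : ↥P)⁆) ^ L = 1 :=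
      orderOf_dvd_iff_pow_eq_one.mp h1
    have h3 := congrArg (fun z : ↥P => (z : G)) h2
    push_cast at h3
    have h4 : ((⁅(⟨y, hyP⟩ : ↥P), (⟨x, hxP⟩ : ↥P)⁆ : ↥P) : G) = y * x * y⁻¹ * x⁻¹ := rfl
    rw [h4] at h3
    exact h3
  -- the subgroup N generated by the H-class of x
  set CS : Set G := conjSet H x with hCS
  set N : Subgroup G := Subgroup.closure CS with hN
  have hNH : N ≤ H := (Subgroup.closure_le H).mpr (conjSet_subset H hxH)
  have hCSN : CS ⊆ (N : Set G) := Subgroup.subset_closure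
  have memN : ∀ h ∈ H, h * x * h⁻¹ * x⁻¹ ∈ N := fun h hh =>
    mul_mem (hCSN ⟨h, hh, rfl⟩) (inv_mem (hCSN (mem_conjSet_self H x)))
  have conj_mem_N : ∀ a ∈ H, ∀ g ∈ N, a * g * a⁻¹ ∈ N := by
    intro a ha g hg
    refine Subgroup.closure_induction (p := fun g _ => a * g * a⁻¹ ∈ N) ?_ ?_ ?_ ?_ hg
    · intro t ht; exact hCSN (conjSet_stable H x ha ht)
    · simpa using N.one_mem
    · intro g₁ g₂ h₁ h₂ ih₁ ih₂
      have hgg : a * (g₁ * g₂) * a⁻¹ = (a * g₁ * a⁻¹) * (a * g₂ * a⁻¹) := by group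
      rw [hgg]; exact mul_mem ih₁ ih₂
    · intro g₁ h₁ ih₁
      have hgg : a * g₁⁻¹ * a⁻¹ = (a * g₁ * a⁻¹)⁻¹ := by group
      rw [hgg]; exact inv_mem ih₁
  -- conjugation homomorphisms on N and the induced maps on the abelianization
  let ψ : ↥N →* Abelianization ↥N := Abelianization.of
  let lam : ∀ a, a ∈ H → (Abelianization ↥N →* Abelianization ↥N) := fun a ha =>
    Abelianization.lift (ψ.comp (conjHom N a (conj_mem_N a ha)))
  have key : ∀ a (ha : a ∈ H) (n : ↥N),
      ψ (conjHom N a (conj_mem_N a ha) n) = lam a ha (ψ n) :=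
    fun a ha n => (Abelianization.lift_apply_of (ψ.comp (conjHom N a (conj_mem_N a ha))) n).symm
  -- the main torsion claim in the abelianization of N
  have Main : ∀ h (hh : h ∈ H), (ψ ⟨h * x * h⁻¹ * x⁻¹, memN h hh⟩) ^ L = 1 := by
    intro h hh
    refine Subgroup.closure_induction
      (p := fun h hh => (ψ ⟨h * x * h⁻¹ * x⁻¹, memN h hh⟩) ^ L = 1) ?_ ?_ ?_ ?_ hh
    · intro y hy
      show (ψ ⟨y * x * y⁻¹ * x⁻¹, memN y (Subgroup.subset_closure hy)⟩) ^ L = 1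
      have h0 := horder y hy
      have h1 : (⟨y * x * y⁻¹ * x⁻¹, memN y (Subgroup.subset_closure hy)⟩ : ↥N) ^ L = 1 := by
        ext; push_cast; exact h0
      rw [← map_pow, h1, map_one]
    · show (ψ ⟨1 * x * 1⁻¹ * x⁻¹, memN 1 (one_mem H)⟩) ^ L = 1
      have h1 : (⟨1 * x * 1⁻¹ * x⁻¹, memN 1 (one_mem H)⟩ : ↥N) = 1 := by
        ext; push_cast; group
      rw [h1, map_one, one_pow]
    · intro a b ha hb iha ihb
      show (ψ ⟨(a * b) * x * (a * b)⁻¹ * x⁻¹, memN _ (mul_mem ha hb)⟩) ^ L = 1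
      have hid : (⟨(a * b) * x * (a * b)⁻¹ * x⁻¹, memN _ (mul_mem ha hb)⟩ : ↥N)
          = conjHom N a (conj_mem_N a ha) ⟨b * x * b⁻¹ * x⁻¹, memN b hb⟩ *
            ⟨a * x * a⁻¹ * x⁻¹, memN a ha⟩ := by
        ext
        push_cast [conjHom_coe]
        group
      rw [hid, map_mul, mul_pow, key a ha, ← map_pow, ihb, map_one, iha, one_mul]
    · intro a ha iha
      show (ψ ⟨a⁻¹ * x * (a⁻¹)⁻¹ * x⁻¹, memN _ (inv_mem ha)⟩) ^ L = 1
      have hid : (⟨a⁻¹ * x * (a⁻¹)⁻¹ * x⁻¹, memN _ (inv_mem ha)⟩ : ↥N)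
          = conjHom N a⁻¹ (conj_mem_N a⁻¹ (inv_mem ha))
              (⟨a * x * a⁻¹ * x⁻¹, memN a ha⟩⁻¹) := by
        ext
        push_cast [conjHom_coe]
        group
      rw [hid, key a⁻¹ (inv_mem ha), map_inv, ← map_pow, inv_pow, iha, inv_one, map_one]
  -- the finite set W of images in the abelianization
  have hCfin : CS.Finite := (hclass x hx).1
  have hCcard : CS.ncard ≤ m := (hclass x hx).2
  set Ctil : Set ↥N := {n : ↥N | (n : G) ∈ CS} with hCtil
  have hCtilfin : Ctil.Finite := by
    have : Ctil = (Subtype.val : ↥N → G) ⁻¹' CS := rfl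
    rw [this]
    exact Set.Finite.preimage (Set.injOn_of_injective Subtype.val_injective) hCfin
  have hCtilcard : Ctil.ncard ≤ m := by
    have hsub : Subtype.val '' Ctil ⊆ CS := by rintro - ⟨n, hn, rfl⟩; exact hn
    calc Ctil.ncard = (Subtype.val '' Ctil).ncard :=
          (Set.ncard_image_of_injective _ Subtype.val_injective).symm
      _ ≤ CS.ncard := Set.ncard_le_ncard hsub hCfin
      _ ≤ m := hCcard
  set W : Set (Abelianization ↥N) :=
    (fun p : ↥N × ↥N => ψ (p.1 * p.2⁻¹)) '' (Ctil ×ˢ Ctil) with hW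
  have hWfin : W.Finite := (hCtilfin.prod hCtilfin).image _
  have hWcard : W.ncard ≤ m * m := by
    haveI := hCtilfin.to_subtype
    have hsurj : Function.Surjective
        (fun p : ↥Ctil × ↥Ctil => (⟨ψ ((p.1 : ↥N) * (p.2 : ↥N)⁻¹),
          ⟨((p.1 : ↥N), (p.2 : ↥N)), ⟨p.1.2, p.2.2⟩, rfl⟩⟩ : ↥W)) := by
      rintro ⟨-, ⟨na, nb⟩, ⟨hna, hnb⟩, rfl⟩
      exact ⟨(⟨na, hna⟩, ⟨nb, hnb⟩), rfl⟩
    calc W.ncard = Nat.card ↥W := (Nat.card_coe_set_eq W).symm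
      _ ≤ Nat.card (↥Ctil × ↥Ctil) := Nat.card_le_card_of_surjective _ hsurj
      _ = Ctil.ncard * Ctil.ncard := by
          rw [Nat.card_prod, Nat.card_coe_set_eq]
      _ ≤ m * m := Nat.mul_le_mul hCtilcard hCtilcard
  have hWtor : ∀ u ∈ W, u ^ L = 1 := by
    rintro - ⟨⟨na, nb⟩, ⟨hna, hnb⟩, rfl⟩
    obtain ⟨h₁, hh₁, hna'⟩ := hna
    obtain ⟨h₂, hh₂, hnb'⟩ := hnb
    have hh : h₂⁻¹ * h₁ ∈ H := mul_mem (inv_mem hh₂) hh₁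
    have hid : na * nb⁻¹ = conjHom N h₂ (conj_mem_N h₂ hh₂)
        ⟨(h₂⁻¹ * h₁) * x * (h₂⁻¹ * h₁)⁻¹ * x⁻¹, memN _ hh⟩ := by
      ext
      push_cast [conjHom_coe]
      rw [← hna', ← hnb']
      group
    show (ψ (na * nb⁻¹)) ^ L = 1
    rw [hid, key h₂ hh₂, ← map_pow, Main _ hh, map_one]
  obtain ⟨hDfin, hDcard⟩ := card_closure_le_of_torsion hWfin hLpos hWtor
  set D : Subgroup (Abelianization ↥N) := Subgroup.closure W with hD
  -- the subgroup K = [H,x]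
  set SS : Set G := {y : G | ∃ h ∈ H, ⁅h, x⁆ = y} with hSS
  set K : Subgroup G := Subgroup.closure SS with hK
  have hSN : SS ⊆ (N : Set G) := by
    rintro - ⟨h, hh, rfl⟩
    have hcd : ⁅h, x⁆ = h * x * h⁻¹ * x⁻¹ := commutatorElement_def h x
    rw [SetLike.mem_coe, hcd]
    exact memN h hh
  have hKN : K ≤ N := (Subgroup.closure_le N).mpr hSN
  set B : Subgroup ↥N := K.subgroupOf N with hB
  have hcardKB : Nat.card ↥K = Nat.card ↥B :=
    (Nat.card_congr (Subgroup.subgroupOfEquivOfLe hKN).toEquiv).symm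
  set ρ : ↥B →* Abelianization ↥N := ψ.comp B.subtype with hρ
  -- the commutator subgroup of N is finite of bounded order (Schur)
  have hNcomm : Finite (commutator ↥N) ∧ Nat.card (commutator ↥N) ≤ c := by
    refine schur_aux H CS m (2*m) hm1 hCfin (by omega) (conjSet_subset H hxH)
      (fun v hv => hrel v (hclassY x hx hv))
  haveI := hNcomm.1
  let κ : ↥ρ.ker → ↥(commutator ↥N) := fun b =>
    ⟨B.subtype b.1, (QuotientGroup.eq_one_iff (B.subtype b.1)).mp b.2⟩
  have hκinj : Function.Injective κ := by
    intro b₁ b₂ hb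
    have h1 := Subtype.ext_iff.mp hb
    exact Subtype.ext (Subtype.ext h1)
  have hcardker : Nat.card ↥ρ.ker ≤ c :=
    (Nat.card_le_card_of_injective κ hκinj).trans hNcomm.2
  have hfinker : Finite ↥ρ.ker := Finite.of_injective κ hκinj
  -- the range of ρ lies in D
  have hrange : ∀ b : ↥B, ρ b ∈ D := by
    intro b
    obtain ⟨⟨g, hgN⟩, hgK⟩ := b
    rw [Subgroup.mem_subgroupOf] at hgK
    have hgK' : g ∈ K := hgK
    clear hgK
    show ψ ⟨g, hgN⟩ ∈ D
    revert hgN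
    refine fun hgN _ => Subgroup.closure_induction
      (p := fun g _ => ∀ (hgN : g ∈ N), ψ ⟨g, hgN⟩ ∈ D)
      ?_ ?_ ?_ ?_ hgK' hgN
    · rintro t ⟨h, hh, rfl⟩ htN
      refine Subgroup.subset_closure ?_
      refine ⟨(⟨h * x * h⁻¹, hCSN ⟨h, hh, rfl⟩⟩, ⟨x, hCSN (mem_conjSet_self H x)⟩),
        ⟨⟨h, hh, rfl⟩, mem_conjSet_self H x⟩, ?_⟩
      refine congrArg ψ (Subtype.ext ?_)
      push_cast
      rw [commutatorElement_def]
    · intro h1N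
      have h1 : (⟨(1 : G), h1N⟩ : ↥N) = 1 := rfl
      rw [h1, map_one]
      exact D.one_mem
    · intro g₁ g₂ hg₁ hg₂ ih₁ ih₂ hN12
      have h₁N : g₁ ∈ N := hKN hg₁
      have h₂N : g₂ ∈ N := hKN hg₂
      have h1 : (⟨g₁ * g₂, hN12⟩ : ↥N) = ⟨g₁, h₁N⟩ * ⟨g₂, h₂N⟩ := rfl
      rw [h1, map_mul]
      exact mul_mem (ih₁ h₁N) (ih₂ h₂N)
    · intro g₁ hg₁ ih₁ hNinv
      have h₁N : g₁ ∈ N := hKN hg₁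
      have h1 : (⟨g₁⁻¹, hNinv⟩ : ↥N) = (⟨g₁, h₁N⟩ : ↥N)⁻¹ := rfl
      rw [h1, map_inv]
      exact inv_mem (ih₁ h₁N)
  have hrange' : ρ.range ≤ D := by rintro - ⟨b, rfl⟩; exact hrange b
  haveI := hDfin
  have hfinrange : Finite ↥ρ.range :=
    Finite.of_injective (Subgroup.inclusion hrange') (Subgroup.inclusion_injective hrange')
  have hcardrange : Nat.card ↥ρ.range ≤ L ^ (m * m) :=
    (Nat.card_le_card_of_injective (Subgroup.inclusion hrange')
      (Subgroup.inclusion_injective hrange')).trans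
      (hDcard.trans (Nat.pow_le_pow_right hLpos hWcard))
  have hquot : Nat.card (↥B ⧸ ρ.ker) = Nat.card ↥ρ.range :=
    Nat.card_congr (QuotientGroup.quotientKerEquivRange ρ).toEquiv
  haveI hfinquot : Finite (↥B ⧸ ρ.ker) :=
    Finite.of_equiv _ (QuotientGroup.quotientKerEquivRange ρ).toEquiv.symm
  haveI := hfinker
  have hcardB : Nat.card ↥B = Nat.card (↥B ⧸ ρ.ker) * Nat.card ↥ρ.ker :=
    Subgroup.card_eq_card_quotient_mul_card_subgroup ρ.ker
  have hposquot : 0 < Nat.card (↥B ⧸ ρ.ker) := Nat.card_pos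
  have hposker : 0 < Nat.card ↥ρ.ker := Nat.card_pos
  constructor
  · rw [hcardKB, hcardB]
    exact Nat.mul_pos hposquot hposker
  · have hfinal : Nat.card ↥K ≤ L ^ (m * m) * c := by
      rw [hcardKB, hcardB]
      exact Nat.mul_le_mul (hquot ▸ hcardrange) hcardker
    exact hfinal
end

section
/- Let w be a group word, G a group, and K a subgroup of G containing w(G) such that [K : C_K(x)] ≤ m for every w-value x ∈ G_w. Then for every w-value x, the normal closure ([w(G), x])^K is finite of order bounded by a function of m only. -/
/-- The normal closure in the subgroup `K` of the subgroup `S`. -/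
def normalClosureIn {G : Type*} [Group G] (K S : Subgroup G) : Subgroup G :=
  Subgroup.closure {x : G | ∃ k ∈ K, ∃ s ∈ S, k * s * k⁻¹ = x}

open scoped commutatorElement

open Subgroup

section Aux

variable {G : Type*} [Group G]

/-- A conjugate of a `w`-value is a `w`-value. -/
lemma wValues_conj {n : ℕ} (w : FreeGroup (Fin n)) {x : G}
    (hx : x ∈ wValues w G) (g : G) :
    g * x * g⁻¹ ∈ wValues w G := by
  obtain ⟨c, rfl⟩ := hx
  refine ⟨fun i => g * c i * g⁻¹, ?_⟩
  have h : ∀ a : FreeGroup (Fin n),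
      FreeGroup.lift (fun i => g * c i * g⁻¹) a
        = ((MulAut.conj g).toMonoidHom.comp (FreeGroup.lift c)) a := by
    intro a
    refine DFunLike.congr_fun ?_ a
    ext i
    simp
  simpa using h w

lemma commute_of_closure (S : Set G) {c : G} (hc : ∀ s ∈ S, Commute s c) :
    ∀ g ∈ closure S, Commute g c := fun _ hg =>
  closure_induction (fun s hs => hc s hs) (Commute.one_left c)
    (fun _ _ _ _ ha hb => ha.mul_left hb) (fun _ _ ha => ha.inv_left) hg

lemma centralizer_subgroupOf_le_center (S : Set G) :
    (centralizer S).subgroupOf (closure S) ≤ center ↥(closure S) := by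
  intro c hc
  rw [mem_subgroupOf] at hc
  rw [Subgroup.mem_center_iff]
  intro p
  have h := commute_of_closure S (fun s hs => mem_centralizer_iff.mp hc s hs) (p : G) p.2
  exact Subtype.ext h

lemma centralizer_insert_eq (a : G) (S : Set G) :
    centralizer (insert a S) = centralizer {a} ⊓ centralizer S := by
  ext g
  simp only [Subgroup.mem_inf, mem_centralizer_iff, Set.mem_insert_iff,
    Set.mem_singleton_iff]
  constructor
  · intro h
    exact ⟨fun x hx => h x (Or.inl hx), fun x hx => h x (Or.inr hx)⟩
  · rintro ⟨h1, h2⟩ x (rfl | hx)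
    exacts [h1 x rfl, h2 x hx]

lemma commutator_conj (g a b : G) : g * ⁅a, b⁆ * g⁻¹ = ⁅g * a * g⁻¹, g * b * g⁻¹⁆ := by
  simp only [commutatorElement_def]; group

lemma commutator_center_adjust {H : Type*} [Group H] {z z' : H} (a b : H)
    (hz : z ∈ center H) (hz' : z' ∈ center H) : ⁅a * z, b * z'⁆ = ⁅a, b⁆ := by
  have h1 : ∀ w : H, z * w * z⁻¹ = w := fun w => by
    rw [← Subgroup.mem_center_iff.mp hz w, mul_inv_cancel_right]
  have h2 : ∀ w : H, z' * w * z'⁻¹ = w := fun w => by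
    rw [← Subgroup.mem_center_iff.mp hz' w, mul_inv_cancel_right]
  calc ⁅a * z, b * z'⁆ = a * (z * (b * z') * z⁻¹) * a⁻¹ * (b * z')⁻¹ := by
        simp only [commutatorElement_def]; group
    _ = a * (b * z') * a⁻¹ * (b * z')⁻¹ := by rw [h1]
    _ = a * b * (z' * a⁻¹ * z'⁻¹) * b⁻¹ := by group
    _ = a * b * a⁻¹ * b⁻¹ := by rw [h2]
    _ = ⁅a, b⁆ := (commutatorElement_def a b).symm

lemma commutatorSet_finite_card {H : Type*} [Group H] (h0 : (center H).index ≠ 0) :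
    Finite (commutatorSet H) ∧ Nat.card (commutatorSet H) ≤ (center H).index ^ 2 := by
  have hfin : Finite (H ⧸ center H) := by
    refine Nat.finite_of_card_ne_zero ?_
    rwa [← Subgroup.index_eq_card]
  set ψ : (H ⧸ center H) × (H ⧸ center H) → H := fun p => ⁅p.1.out, p.2.out⁆ with hψ
  have hsub : commutatorSet H ⊆ Set.range ψ := by
    rintro _ ⟨a, b, rfl⟩
    refine ⟨(QuotientGroup.mk a, QuotientGroup.mk b), ?_⟩
    obtain ⟨z, hz⟩ := QuotientGroup.mk_out_eq_mul (center H) a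
    obtain ⟨z', hz'⟩ := QuotientGroup.mk_out_eq_mul (center H) b
    show ⁅(QuotientGroup.mk a : H ⧸ center H).out, (QuotientGroup.mk b : H ⧸ center H).out⁆ = ⁅a, b⁆
    rw [hz, hz']
    exact commutator_center_adjust a b z.2 z'.2
  have hfr : (Set.range ψ).Finite := Set.finite_range ψ
  refine ⟨(hfr.subset hsub).to_subtype, ?_⟩
  have h1 : Nat.card (commutatorSet H) ≤ Nat.card (Set.range ψ) := Nat.card_mono hfr hsub
  have h2 : Nat.card (Set.range ψ) ≤ Nat.card ((H ⧸ center H) × (H ⧸ center H)) :=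
    Nat.card_le_card_of_surjective _ Set.rangeFactorization_surjective
  have h3 : Nat.card ((H ⧸ center H) × (H ⧸ center H)) = (center H).index ^ 2 := by
    rw [Nat.card_prod, Subgroup.index_eq_card, sq]
  omega

lemma cardCommutatorBound_mono {a b : ℕ} (h : a ≤ b) :
    cardCommutatorBound a ≤ cardCommutatorBound b := by
  have hb1 : 1 ≤ cardCommutatorBound b := by
    unfold cardCommutatorBound
    rcases Nat.eq_zero_or_pos b with rfl | hb
    · simp
    · exact Nat.one_le_pow _ _ (Nat.pow_pos hb)
  rcases Nat.eq_zero_or_pos a with rfl | ha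
  · simpa [cardCommutatorBound] using hb1
  have hb : 0 < b := ha.trans_le h
  unfold cardCommutatorBound
  have h1 : a ^ (2 * a) ≤ b ^ (2 * b) :=
    (Nat.pow_le_pow_left h _).trans (Nat.pow_le_pow_right hb (by omega))
  have h2 : a ^ (2 * a + 1) + 1 ≤ b ^ (2 * b + 1) + 1 := by
    have := (Nat.pow_le_pow_left h (2 * a + 1)).trans
      (Nat.pow_le_pow_right hb (by omega : 2 * a + 1 ≤ 2 * b + 1))
    omega
  calc (a ^ (2 * a)) ^ (a ^ (2 * a + 1) + 1)
      ≤ (b ^ (2 * b)) ^ (a ^ (2 * a + 1) + 1) := Nat.pow_le_pow_left h1 _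
    _ ≤ (b ^ (2 * b)) ^ (b ^ (2 * b + 1) + 1) :=
        Nat.pow_le_pow_right (Nat.pow_pos hb) h2

/-- A commutator of two elements of `K`, each with centralizer of
index at most `m` in `K`, has order dividing `(cardCommutatorBound ((m*m)^2))!`. -/
lemma commutator_pow_eq_one {K : Subgroup G} {m : ℕ} {y z : G}
    (hyK : y ∈ K) (hzK : z ∈ K)
    (hy0 : (centralizer {y}).relIndex K ≠ 0) (hym : (centralizer {y}).relIndex K ≤ m)
    (hz0 : (centralizer {z}).relIndex K ≠ 0) (hzm : (centralizer {z}).relIndex K ≤ m) :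
    ⁅y, z⁆ ^ (Nat.factorial (cardCommutatorBound ((m * m) ^ 2))) = 1 := by
  have hyP : y ∈ closure ({y, z} : Set G) := subset_closure (by simp)
  have hzP : z ∈ closure ({y, z} : Set G) := subset_closure (by simp)
  set P : Subgroup G := closure ({y, z} : Set G) with hP
  have hPK : P ≤ K := by
    rw [hP, closure_le]
    rintro g (rfl | hg)
    · exact hyK
    · rw [Set.mem_singleton_iff] at hg; subst hg; exact hzK
  have hcen : centralizer ({y, z} : Set G) = centralizer {y} ⊓ centralizer {z} :=
    centralizer_insert_eq y {z}
  have h10 : (centralizer ({y, z} : Set G)).relIndex K ≠ 0 := by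
    rw [hcen]; exact relIndex_inf_ne_zero hy0 hz0
  have h1m : (centralizer ({y, z} : Set G)).relIndex K ≤ m * m := by
    rw [hcen]; exact relIndex_inf_le.trans (Nat.mul_le_mul hym hzm)
  have hP0 : (centralizer ({y, z} : Set G)).relIndex P ≠ 0 :=
    fun h => h10 (relIndex_eq_zero_of_le_right hPK h)
  have hPm : (centralizer ({y, z} : Set G)).relIndex P ≤ m * m :=
    (relIndex_le_of_le_right hPK h10).trans h1m
  have hle : (centralizer ({y, z} : Set G)).subgroupOf P ≤ center ↥P :=
    centralizer_subgroupOf_le_center _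
  have hcind : (center ↥P).index ∣ (centralizer ({y, z} : Set G)).relIndex P :=
    index_dvd_of_le hle
  have hc0 : (center ↥P).index ≠ 0 := by
    intro h
    rw [h] at hcind
    exact hP0 (zero_dvd_iff.mp hcind)
  have hcm : (center ↥P).index ≤ m * m :=
    (Nat.le_of_dvd (Nat.pos_of_ne_zero hP0) hcind).trans hPm
  obtain ⟨hfinCS, hcardCS⟩ := commutatorSet_finite_card hc0
  haveI := hfinCS
  haveI : Finite (commutator ↥P) := inferInstance
  have hB : Nat.card (commutator ↥P) ≤ cardCommutatorBound ((m * m) ^ 2) :=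
    (card_commutator_le_of_finite_commutatorSet ↥P).trans
      (cardCommutatorBound_mono (hcardCS.trans (Nat.pow_le_pow_left hcm 2)))
  have hBpos : 0 < Nat.card (commutator ↥P) := Nat.card_pos
  set c : ↥P := ⁅(⟨y, hyP⟩ : ↥P), (⟨z, hzP⟩ : ↥P)⁆ with hc
  have hcmem : c ∈ commutator ↥P := commutator_mem_commutator (mem_top _) (mem_top _)
  have hpow : c ^ Nat.card (commutator ↥P) = 1 := by
    have h := pow_card_eq_one' (G := ↥(commutator ↥P)) (x := ⟨c, hcmem⟩)
    rw [Subtype.ext_iff, SubmonoidClass.coe_pow] at h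
    exact h
  have hdvd : orderOf c ∣ Nat.factorial (cardCommutatorBound ((m * m) ^ 2)) :=
    (orderOf_dvd_of_pow_eq_one hpow).trans (Nat.dvd_factorial hBpos hB)
  have hfin : c ^ Nat.factorial (cardCommutatorBound ((m * m) ^ 2)) = 1 :=
    orderOf_dvd_iff_pow_eq_one.mp hdvd
  have h3 := congrArg (Subtype.val : ↥P → G) hfin
  simpa [hc, commutatorElement_def] using h3

end Aux

/-- Lemma 2.3b: if `w(G) ≤ K` and every `w`-value has centralizer of index at
most `m` in `K`, then `[w(G), x]^K` has `m`-bounded finite order for every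
`w`-value `x`. -/
theorem stmt_4 :
    ∃ f : ℕ → ℕ, ∀ (k m : ℕ) (G : Type*) [Group G] (w : FreeGroup (Fin k))
      (K : Subgroup G), verbal w G ≤ K →
      (∀ x ∈ wValues w G,
        0 < (Subgroup.centralizer {x}).relIndex K ∧
          (Subgroup.centralizer {x}).relIndex K ≤ m) →
      ∀ x ∈ wValues w G,
        0 < Nat.card (normalClosureIn K
            (Subgroup.closure {y : G | ∃ h ∈ verbal w G, ⁅h, x⁆ = y})) ∧
          Nat.card (normalClosureIn K
            (Subgroup.closure {y : G | ∃ h ∈ verbal w G, ⁅h, x⁆ = y})) ≤ f m := by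
  classical
  refine ⟨fun m => (Nat.factorial (cardCommutatorBound ((m * m) ^ 2))) ^ (m * m) *
    cardCommutatorBound (((m * m) ^ (m * m)) ^ 2), ?_⟩
  intro k m G _ w K hWK hcent x hx
  obtain ⟨hx0', hxm'⟩ := hcent x hx
  have hx0 : (centralizer {x}).relIndex K ≠ 0 := hx0'.ne'
  have hxK : x ∈ K := hWK (subset_closure hx)
  have hm1 : 1 ≤ m := le_trans hx0' hxm'
  -- the conjugacy class of `x` under `K`
  set A : Set G := {a | ∃ g, g ∈ K ∧ g * x * g⁻¹ = a} with hA
  have hxA : x ∈ A := ⟨1, one_mem K, by group⟩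
  have hAX : A ⊆ wValues w G := by
    rintro a ⟨g, hg, rfl⟩
    exact wValues_conj w hx g
  have hAK : ∀ a ∈ A, a ∈ K := by
    rintro a ⟨g, hg, rfl⟩
    exact mul_mem (mul_mem hg hxK) (inv_mem hg)
  have hAconj : ∀ g ∈ K, ∀ a ∈ A, g * a * g⁻¹ ∈ A := by
    rintro g hg a ⟨g', hg', rfl⟩
    exact ⟨g * g', mul_mem hg hg', by group⟩
  -- A is finite of cardinality at most m
  haveI hqfin : Finite (↥K ⧸ (centralizer {x}).subgroupOf K) :=
    Nat.finite_of_card_ne_zero hx0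
  have hwd : ∀ (a b : ↥K), a⁻¹ * b ∈ (centralizer {x}).subgroupOf K →
      ((a : G) * x * (a : G)⁻¹ = (b : G) * x * (b : G)⁻¹) := by
    intro a b hmem
    rw [mem_subgroupOf] at hmem
    have hc : x * ((a⁻¹ * b : ↥K) : G) = ((a⁻¹ * b : ↥K) : G) * x :=
      mem_centralizer_iff.mp hmem x rfl
    have hc' : x * ((a : G)⁻¹ * (b : G)) = ((a : G)⁻¹ * (b : G)) * x := by
      simpa using hc
    calc (a : G) * x * (a : G)⁻¹
        = (a : G) * (x * ((a : G)⁻¹ * (b : G))) * (b : G)⁻¹ := by group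
      _ = (a : G) * (((a : G)⁻¹ * (b : G)) * x) * (b : G)⁻¹ := by rw [hc']
      _ = (b : G) * x * (b : G)⁻¹ := by group
  set θ : (↥K ⧸ (centralizer {x}).subgroupOf K) → G :=
    fun q => Quotient.liftOn' q (fun g : ↥K => (g : G) * x * (g : G)⁻¹)
      (fun a b hab => hwd a b (QuotientGroup.leftRel_apply.mp hab)) with hθ
  have hrange : Set.range θ = A := by
    ext a
    constructor
    · rintro ⟨q, rfl⟩
      obtain ⟨g, rfl⟩ : ∃ g : ↥K, Quotient.mk'' g = q := ⟨q.out, q.out_eq'⟩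
      exact ⟨(g : G), g.2, rfl⟩
    · rintro ⟨g, hg, rfl⟩
      exact ⟨Quotient.mk'' ⟨g, hg⟩, rfl⟩
  have hAfin : A.Finite := hrange ▸ Set.finite_range θ
  have hAcard : Nat.card A ≤ m := by
    have h1 : Nat.card (Set.range θ) ≤ Nat.card (↥K ⧸ (centralizer {x}).subgroupOf K) :=
      Nat.card_le_card_of_surjective _ Set.rangeFactorization_surjective
    rw [hrange] at h1
    exact h1.trans hxm'
  -- the set Y of w-values and inverses of w-values
  set Y : Set G := {y | y ∈ wValues w G ∨ y⁻¹ ∈ wValues w G} with hY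
  have hYK : ∀ y ∈ Y, y ∈ K := by
    intro y hy
    rcases hy with h | h
    · exact hWK (subset_closure h)
    · have := inv_mem (hWK (subset_closure h))
      rwa [inv_inv] at this
  have hYconj : ∀ g ∈ K, ∀ y ∈ Y, g * y * g⁻¹ ∈ Y := by
    intro g hg y hy
    rcases hy with h | h
    · exact Or.inl (wValues_conj w h g)
    · refine Or.inr ?_
      have he : (g * y * g⁻¹)⁻¹ = g * y⁻¹ * g⁻¹ := by group
      rw [he]
      exact wValues_conj w h g
  have hYcen : ∀ y ∈ Y, (centralizer {y}).relIndex K ≠ 0 ∧ (centralizer {y}).relIndex K ≤ m := by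
    intro y hy
    rcases hy with h | h
    · obtain ⟨p, q⟩ := hcent y h
      exact ⟨p.ne', q⟩
    · obtain ⟨p, q⟩ := hcent y⁻¹ h
      have he : centralizer ({y⁻¹} : Set G) = centralizer {y} := by
        ext g
        constructor
        · intro hg
          rw [mem_centralizer_iff] at hg ⊢
          intro h' hh'
          rw [Set.mem_singleton_iff] at hh'
          rw [hh']
          exact Commute.inv_left_iff.mp (hg y⁻¹ rfl)
        · intro hg
          rw [mem_centralizer_iff] at hg ⊢
          intro h' hh'
          rw [Set.mem_singleton_iff] at hh'
          rw [hh']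
          exact Commute.inv_left (hg y rfl)
      rw [he] at p q
      exact ⟨p.ne', q⟩
  -- the generating set S
  set S : Set G := {s | ∃ y ∈ Y, ∃ z ∈ A, ⁅y, z⁆ = s} with hS
  have hSK : ∀ s ∈ S, s ∈ K := by
    rintro s ⟨y, hy, z, hz, rfl⟩
    rw [commutatorElement_def]
    exact mul_mem (mul_mem (mul_mem (hYK y hy) (hAK z hz)) (inv_mem (hYK y hy)))
      (inv_mem (hAK z hz))
  have hSconj : ∀ g ∈ K, ∀ s ∈ S, g * s * g⁻¹ ∈ S := by
    rintro g hg s ⟨y, hy, z, hz, rfl⟩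
    exact ⟨g * y * g⁻¹, hYconj g hg y hy, g * z * g⁻¹, hAconj g hg z hz,
      (commutator_conj g y z).symm⟩
  have hScen : ∀ s ∈ S, (centralizer {s}).relIndex K ≠ 0 ∧
      (centralizer {s}).relIndex K ≤ m * m := by
    rintro s ⟨y, hy, z, hz, rfl⟩
    obtain ⟨hy0, hym⟩ := hYcen y hy
    obtain ⟨hz0, hzm⟩ := hcent z (hAX hz)
    have hz0' : (centralizer {z}).relIndex K ≠ 0 := hz0.ne'
    have hle : centralizer {y} ⊓ centralizer {z} ≤ centralizer {⁅y, z⁆} := by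
      intro c hc
      rw [Subgroup.mem_inf] at hc
      rw [mem_centralizer_iff]
      intro h' hh'
      rw [Set.mem_singleton_iff] at hh'
      subst hh'
      have h1 : Commute y c := mem_centralizer_iff.mp hc.1 y rfl
      have h2 : Commute z c := mem_centralizer_iff.mp hc.2 z rfl
      show ⁅y, z⁆ * c = c * ⁅y, z⁆
      rw [commutatorElement_def]
      exact ((h1.mul_left h2).mul_left h1.inv_left).mul_left h2.inv_left
    have hd : (centralizer {⁅y, z⁆}).relIndex K ∣
        (centralizer {y} ⊓ centralizer {z}).relIndex K := relIndex_dvd_of_le_left K hle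
    have hn0 : (centralizer {y} ⊓ centralizer {z}).relIndex K ≠ 0 :=
      relIndex_inf_ne_zero hy0 hz0'
    refine ⟨fun h => hn0 (by rwa [h, zero_dvd_iff] at hd), ?_⟩
    exact (Nat.le_of_dvd (Nat.pos_of_ne_zero hn0) hd).trans
      (relIndex_inf_le.trans (Nat.mul_le_mul hym hzm))
  have hSpow : ∀ s ∈ S,
      s ^ (Nat.factorial (cardCommutatorBound ((m * m) ^ 2))) = 1 := by
    rintro s ⟨y, hy, z, hz, rfl⟩
    obtain ⟨hy0, hym⟩ := hYcen y hy
    obtain ⟨hz0, hzm⟩ := hcent z (hAX hz)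
    exact commutator_pow_eq_one (hYK y hy) (hAK z hz) hy0 hym hz0.ne' hzm
  -- S is finite of cardinality at most m * m
  have hSsub : S ⊆ (fun p : G × G => p.1 * p.2⁻¹) '' (A ×ˢ A) := by
    rintro s ⟨y, hy, z, hz, rfl⟩
    refine ⟨(y * z * y⁻¹, z), ⟨hAconj y (hYK y hy) z hz, hz⟩, ?_⟩
    show (y * z * y⁻¹) * z⁻¹ = ⁅y, z⁆
    rw [commutatorElement_def]
  have hSfin : S.Finite := ((hAfin.prod hAfin).image _).subset hSsub
  have hScard : Nat.card S ≤ m * m := by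
    have h1 : Nat.card S ≤ Nat.card ((fun p : G × G => p.1 * p.2⁻¹) '' (A ×ˢ A)) :=
      Nat.card_mono ((hAfin.prod hAfin).image _) hSsub
    have h2 : Nat.card ((fun p : G × G => p.1 * p.2⁻¹) '' (A ×ˢ A)) ≤
        Nat.card (A ×ˢ A : Set (G × G)) := Nat.card_image_le (hAfin.prod hAfin)
    have h3 : Nat.card (A ×ˢ A : Set (G × G)) = Nat.card A * Nat.card A := by
      rw [Nat.card_congr (Equiv.Set.prod A A), Nat.card_prod]
    have h4 : Nat.card A * Nat.card A ≤ m * m := Nat.mul_le_mul hAcard hAcard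
    omega
  -- the subgroup T₂ generated by S
  have hT₂K : closure S ≤ K := (closure_le K).mpr (fun s hs => hSK s hs)
  have hT₂conj : ∀ g ∈ K, ∀ t ∈ closure S, g * t * g⁻¹ ∈ closure S := by
    intro g hg t ht
    refine closure_induction (fun s hs => subset_closure (hSconj g hg s hs)) ?_ ?_ ?_ ht
    · have h : g * 1 * g⁻¹ = 1 := by group
      rw [h]; exact one_mem _
    · intro a b _ _ ha hb
      have h : g * (a * b) * g⁻¹ = (g * a * g⁻¹) * (g * b * g⁻¹) := by group
      rw [h]; exact mul_mem ha hb
    · intro a _ ha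
      have h : g * a⁻¹ * g⁻¹ = (g * a * g⁻¹)⁻¹ := by group
      rw [h]; exact inv_mem ha
  have hWT : ∀ h ∈ verbal w G, ⁅h, x⁆ ∈ closure S := by
    intro h hh
    have hh' : h ∈ closure (wValues w G) := hh
    refine closure_induction ?_ ?_ ?_ ?_ hh'
    · intro y hy
      exact subset_closure ⟨y, Or.inl hy, x, hxA, rfl⟩
    · have h1 : ⁅(1 : G), x⁆ = 1 := by simp [commutatorElement_def]
      rw [h1]; exact one_mem _
    · intro a b haW hbW ha hb
      have hid : ⁅a * b, x⁆ = a * ⁅b, x⁆ * a⁻¹ * ⁅a, x⁆ := by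
        simp only [commutatorElement_def]; group
      rw [hid]
      exact mul_mem (hT₂conj a (hWK haW) _ hb) ha
    · intro a haW ha
      have hid : ⁅a⁻¹, x⁆ = a⁻¹ * ⁅a, x⁆⁻¹ * (a⁻¹)⁻¹ := by
        simp only [commutatorElement_def]; group
      rw [hid]
      exact hT₂conj a⁻¹ (inv_mem (hWK haW)) _ (inv_mem ha)
  have hTle : normalClosureIn K (Subgroup.closure {y : G | ∃ h ∈ verbal w G, ⁅h, x⁆ = y})
      ≤ closure S := by
    refine (closure_le _).mpr ?_
    rintro t ⟨g, hg, s, hs, rfl⟩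
    refine hT₂conj g hg s ?_
    have hle : Subgroup.closure {y : G | ∃ h ∈ verbal w G, ⁅h, x⁆ = y} ≤ closure S :=
      (closure_le _).mpr (by rintro _ ⟨h, hh, rfl⟩; exact hWT h hh)
    exact hle hs
  -- bound on the relative index of the centralizer of S in K
  have key : ∀ F' : Finset G,
      (∀ s ∈ F', (centralizer {s}).relIndex K ≠ 0 ∧ (centralizer {s}).relIndex K ≤ m * m) →
      (centralizer (F' : Set G)).relIndex K ≠ 0 ∧
        (centralizer (F' : Set G)).relIndex K ≤ (m * m) ^ F'.card := by
    intro F'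
    induction F' using Finset.induction_on with
    | empty =>
      intro _
      have hemp : centralizer (((∅ : Finset G) : Set G)) = ⊤ := by
        ext g
        simp [mem_centralizer_iff]
      rw [hemp, relIndex_top_left]
      simp
    | @insert a F'' ha ih =>
      intro hmem
      have hcoe : ((insert a F'' : Finset G) : Set G) = insert a (F'' : Set G) :=
        Finset.coe_insert a F''
      rw [hcoe, centralizer_insert_eq]
      obtain ⟨h10, h1m⟩ := hmem a (Finset.mem_insert_self a F'')
      obtain ⟨h20, h2m⟩ := ih (fun s hs => hmem s (Finset.mem_insert_of_mem hs))
      refine ⟨relIndex_inf_ne_zero h10 h20, ?_⟩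
      refine relIndex_inf_le.trans ?_
      rw [Finset.card_insert_of_notMem ha, pow_succ, Nat.mul_comm ((m*m) ^ F''.card) (m*m)]
      exact Nat.mul_le_mul h1m h2m
  obtain ⟨hC0, hCm⟩ := key hSfin.toFinset
    (fun s hs => hScen s (hSfin.mem_toFinset.mp hs))
  rw [hSfin.coe_toFinset] at hC0 hCm
  have hFcard : hSfin.toFinset.card ≤ m * m := by
    have h1 : hSfin.toFinset.card = Nat.card S := by
      rw [Nat.card_coe_set_eq, Set.ncard_eq_toFinset_card S hSfin]
    omega
  have hmm1 : 1 ≤ m * m := Nat.one_le_iff_ne_zero.mpr (by positivity)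
  have hCm' : (centralizer S).relIndex K ≤ (m * m) ^ (m * m) :=
    hCm.trans (Nat.pow_le_pow_right hmm1 hFcard)
  have hCT0 : (centralizer S).relIndex (closure S) ≠ 0 :=
    fun hh => hC0 (relIndex_eq_zero_of_le_right hT₂K hh)
  have hCTm : (centralizer S).relIndex (closure S) ≤ (m * m) ^ (m * m) :=
    (relIndex_le_of_le_right hT₂K hC0).trans hCm'
  have hcen_le : (centralizer S).subgroupOf (closure S) ≤ center ↥(closure S) :=
    centralizer_subgroupOf_le_center S
  have hcd : (center ↥(closure S)).index ∣ (centralizer S).relIndex (closure S) :=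
    index_dvd_of_le hcen_le
  have hcind0 : (center ↥(closure S)).index ≠ 0 := by
    intro h
    rw [h] at hcd
    exact hCT0 (zero_dvd_iff.mp hcd)
  have hcindm : (center ↥(closure S)).index ≤ (m * m) ^ (m * m) :=
    (Nat.le_of_dvd (Nat.pos_of_ne_zero hCT0) hcd).trans hCTm
  obtain ⟨hfinCS, hcardCS⟩ := commutatorSet_finite_card hcind0
  haveI := hfinCS
  haveI hfinComm : Finite (commutator ↥(closure S)) := inferInstance
  have hBcard : Nat.card (commutator ↥(closure S)) ≤
      cardCommutatorBound (((m * m) ^ (m * m)) ^ 2) :=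
    (card_commutator_le_of_finite_commutatorSet ↥(closure S)).trans
      (cardCommutatorBound_mono (hcardCS.trans (Nat.pow_le_pow_left hcindm 2)))
  have hBpos : 0 < Nat.card (commutator ↥(closure S)) := Nat.card_pos
  -- the abelianization
  haveI hfinS : Finite ↥S := hSfin.to_subtype
  haveI : Group.FG ↥(closure S) := Group.closure_finite_fg S
  have hofsurj : Function.Surjective
      (Abelianization.of : ↥(closure S) →* Abelianization ↥(closure S)) :=
    fun q => QuotientGroup.induction_on q (fun g => ⟨g, rfl⟩)
  haveI : Group.FG (Abelianization ↥(closure S)) := Group.fg_of_surjective hofsurj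
  set Efac : ℕ := Nat.factorial (cardCommutatorBound ((m * m) ^ 2)) with hEfac
  have hexp : ∀ q : Abelianization ↥(closure S), q ^ Efac = 1 := by
    have htop : Subgroup.closure
        ((Abelianization.of : ↥(closure S) →* Abelianization ↥(closure S)) ''
          ((closure S).subtype ⁻¹' S)) = ⊤ := by
      rw [← MonoidHom.map_closure, closure_preimage_eq_top S,
        map_top_of_surjective _ hofsurj]
    have hker : Subgroup.closure
        ((Abelianization.of : ↥(closure S) →* Abelianization ↥(closure S)) ''
          ((closure S).subtype ⁻¹' S)) ≤
        (powMonoidHom Efac : Abelianization ↥(closure S) →* Abelianization ↥(closure S)).ker := by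
      refine (closure_le _).mpr ?_
      rintro _ ⟨t, ht, rfl⟩
      rw [SetLike.mem_coe, MonoidHom.mem_ker, powMonoidHom_apply, ← map_pow]
      have h1 : t ^ Efac = 1 := by
        have h2 : ((t ^ Efac : ↥(closure S)) : G) = ((1 : ↥(closure S)) : G) := by
          rw [SubmonoidClass.coe_pow]
          simpa using hSpow (t : G) ht
        exact Subtype.ext (by simpa using h2)
      rw [h1, map_one]
    intro q
    have hq : q ∈ (powMonoidHom Efac :
        Abelianization ↥(closure S) →* Abelianization ↥(closure S)).ker :=
      hker (htop ▸ mem_top q)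
    rwa [MonoidHom.mem_ker, powMonoidHom_apply] at hq
  have hQdvd : Nat.card (Abelianization ↥(closure S)) ∣
      Efac ^ (Group.rank (Abelianization ↥(closure S))) :=
    card_dvd_exponent_pow_rank' _ hexp
  have hrank : Group.rank (Abelianization ↥(closure S)) ≤ m * m :=
    (Group.rank_le_of_surjective Abelianization.of hofsurj).trans
      ((Subgroup.rank_closure_finite_le_nat_card S).trans hScard)
  have hEpos : 0 < Efac := Nat.factorial_pos _
  have hQ0 : Nat.card (Abelianization ↥(closure S)) ≠ 0 := by
    intro h
    rw [h] at hQdvd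
    exact (pow_pos hEpos _).ne' (Nat.eq_zero_of_zero_dvd hQdvd)
  have hQle : Nat.card (Abelianization ↥(closure S)) ≤ Efac ^ (m * m) :=
    (Nat.le_of_dvd (pow_pos hEpos _) hQdvd).trans (Nat.pow_le_pow_right hEpos hrank)
  -- assemble the bound on T₂
  have hcardT₂ : Nat.card ↥(closure S) =
      Nat.card (↥(closure S) ⧸ commutator ↥(closure S)) * Nat.card (commutator ↥(closure S)) :=
    Subgroup.card_eq_card_quotient_mul_card_subgroup _
  have hQeq : Nat.card (↥(closure S) ⧸ commutator ↥(closure S)) =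
      Nat.card (Abelianization ↥(closure S)) := rfl
  have hT₂bound : Nat.card ↥(closure S) ≤
      Efac ^ (m * m) * cardCommutatorBound (((m * m) ^ (m * m)) ^ 2) := by
    rw [hcardT₂, hQeq]
    exact Nat.mul_le_mul hQle hBcard
  have hT₂ne : Nat.card ↥(closure S) ≠ 0 := by
    rw [hcardT₂, hQeq]
    exact Nat.mul_ne_zero hQ0 hBpos.ne'
  haveI hT₂fin : Finite ↥(closure S) := Nat.finite_of_card_ne_zero hT₂ne
  -- conclude
  haveI hTfin : Finite ↥(normalClosureIn K
      (Subgroup.closure {y : G | ∃ h ∈ verbal w G, ⁅h, x⁆ = y})) :=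
    Finite.of_injective (fun t => (⟨t.1, hTle t.2⟩ : ↥(closure S)))
      (by intro a b hab; have h2 := congrArg Subtype.val hab; ext; exact h2)
  refine ⟨Nat.card_pos, ?_⟩
  exact (Subgroup.card_le_of_le hTle).trans hT₂bound
end

section
/- Let w = w(x₁,…,x_n) be a multilinear commutator word and H a normal subgroup of a group G. Given g₁,…,g_n ∈ G, h ∈ H and an index s ∈ {1,…,n}, there exist elements yⱼ ∈ gⱼ^H (the H-conjugacy class of gⱼ) for j = 1,…,n such that w(g₁,…,g_{s-1}, g_s h, g_{s+1},…,g_n) = w(y₁,…,y_n) · w(g₁,…,g_{s-1}, h, g_{s+1},…,g_n). -/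
/-- Multilinear commutator words (outer commutator words) on `n` (pairwise
distinct) variables: the single variable is one, and the commutator of two
multilinear commutator words in disjoint variables is one. -/
inductive MlWord : ℕ → Type
  | var : MlWord 1
  | comm : ∀ {a b : ℕ}, MlWord a → MlWord b → MlWord (a + b)

open scoped commutatorElement

/-- Evaluation of a multilinear commutator word at a tuple of group elements. -/
def MlWord.eval {G : Type*} [Group G] : ∀ {n : ℕ}, MlWord n → (Fin n → G) → G
  | _, .var, g => g 0
  | _, .comm u v, g =>
      ⁅u.eval fun i => g (Fin.castAdd _ i), v.eval fun i => g (Fin.natAdd _ i)⁆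

lemma MlWord.eval_conj {G : Type*} [Group G] :
    ∀ {n : ℕ} (w : MlWord n) (g : Fin n → G) (c : G),
      w.eval (fun i => c⁻¹ * g i * c) = c⁻¹ * w.eval g * c
  | _, .var, g, c => rfl
  | _, .comm u v, g, c => by
      simp only [MlWord.eval, eval_conj u (fun i => g (Fin.castAdd _ i)) c,
        eval_conj v (fun i => g (Fin.natAdd _ i)) c, commutatorElement_def]
      group

lemma MlWord.eval_mem {G : Type*} [Group G] {H : Subgroup G} [H.Normal] :
    ∀ {n : ℕ} (w : MlWord n) (g : Fin n → G) (s : Fin n), g s ∈ H → w.eval g ∈ H := by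
  intro n w
  induction w with
  | var =>
      intro g s hs
      simpa [MlWord.eval, Subsingleton.elim (0 : Fin 1) s] using hs
  | @comm a b u v ihu ihv =>
      intro g s hs
      induction s using Fin.addCases with
      | left i =>
          have h1 : u.eval (fun j => g (Fin.castAdd b j)) ∈ H := ihu _ i hs
          simp only [MlWord.eval, commutatorElement_def]
          have h2 : (v.eval fun j => g (Fin.natAdd a j)) *
              (u.eval fun j => g (Fin.castAdd b j))⁻¹ *
              (v.eval fun j => g (Fin.natAdd a j))⁻¹ ∈ H := by
            simpa [mul_assoc] using
              Subgroup.Normal.conj_mem ‹H.Normal› _ (inv_mem h1) (v.eval fun j => g (Fin.natAdd a j))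
          simpa [mul_assoc] using mul_mem h1 h2
      | right i =>
          have h1 : v.eval (fun j => g (Fin.natAdd a j)) ∈ H := ihv _ i hs
          simp only [MlWord.eval, commutatorElement_def]
          have h2 : (u.eval fun j => g (Fin.castAdd b j)) *
              (v.eval fun j => g (Fin.natAdd a j)) *
              (u.eval fun j => g (Fin.castAdd b j))⁻¹ ∈ H := by
            simpa [mul_assoc] using
              Subgroup.Normal.conj_mem ‹H.Normal› _ h1 (u.eval fun j => g (Fin.castAdd b j))
          simpa [mul_assoc] using mul_mem h2 (inv_mem h1)

lemma castAdd_ne_natAdd {a b : ℕ} (i : Fin a) (j : Fin b) :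
    Fin.castAdd b i ≠ Fin.natAdd a j := by
  simp only [Fin.ne_iff_vne, Fin.coe_castAdd, Fin.coe_natAdd]
  omega

lemma update_comp_castAdd {G : Type*} {a b : ℕ} (g : Fin (a + b) → G) (i : Fin a) (x : G) :
    (fun j : Fin a => Function.update g (Fin.castAdd b i) x (Fin.castAdd b j)) =
      Function.update (fun j => g (Fin.castAdd b j)) i x := by
  funext j
  rcases eq_or_ne j i with rfl | hne
  · simp
  · rw [Function.update_of_ne (by simpa [Fin.ext_iff] using fun h => hne (Fin.ext h)),
      Function.update_of_ne hne]

lemma update_castAdd_natAdd {G : Type*} {a b : ℕ} (g : Fin (a + b) → G) (i : Fin a) (x : G) :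
    (fun j : Fin b => Function.update g (Fin.castAdd b i) x (Fin.natAdd a j)) =
      fun j => g (Fin.natAdd a j) := by
  funext j
  exact Function.update_of_ne (castAdd_ne_natAdd i j).symm _ _

lemma update_comp_natAdd {G : Type*} {a b : ℕ} (g : Fin (a + b) → G) (i : Fin b) (x : G) :
    (fun j : Fin b => Function.update g (Fin.natAdd a i) x (Fin.natAdd a j)) =
      Function.update (fun j => g (Fin.natAdd a j)) i x := by
  funext j
  rcases eq_or_ne j i with rfl | hne
  · simp
  · rw [Function.update_of_ne (by simpa [Fin.ext_iff] using fun h => hne (Fin.ext h)),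
      Function.update_of_ne hne]

lemma update_natAdd_castAdd {G : Type*} {a b : ℕ} (g : Fin (a + b) → G) (i : Fin b) (x : G) :
    (fun j : Fin a => Function.update g (Fin.natAdd a i) x (Fin.castAdd b j)) =
      fun j => g (Fin.castAdd b j) := by
  funext j
  exact Function.update_of_ne (castAdd_ne_natAdd j i) _ _

/-- Lemma 2.4 of [DMS-revised]: replacing `g_s` by `g_s h` with `h ∈ H ⊴ G`
changes the `w`-value by a `w`-value on `H`-conjugates of the `g_j`. -/
theorem stmt_6 {G : Type*} [Group G] {n : ℕ} (w : MlWord n) (H : Subgroup G)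
    [H.Normal] (g : Fin n → G) (h : G) (hh : h ∈ H) (s : Fin n) :
    ∃ y : Fin n → G, (∀ j, ∃ k ∈ H, k⁻¹ * g j * k = y j) ∧
      w.eval (Function.update g s (g s * h)) =
        w.eval y * w.eval (Function.update g s h) := by
  induction w with
  | var =>
      refine ⟨g, fun j => ⟨1, H.one_mem, by group⟩, ?_⟩
      have hs : s = 0 := Subsingleton.elim s 0
      subst hs
      simp [MlWord.eval]
  | @comm a b u v ihu ihv =>
      induction s using Fin.addCases with
      | left i =>
          obtain ⟨y₁, hy₁, heq⟩ := ihu (fun j => g (Fin.castAdd b j)) i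
          set c := u.eval (Function.update (fun j => g (Fin.castAdd b j)) i h) with hc_def
          have hc : c ∈ H := MlWord.eval_mem u _ i (by simp [hh])
          refine ⟨Fin.addCases y₁ (fun j => (c⁻¹)⁻¹ * g (Fin.natAdd a j) * c⁻¹), ?_, ?_⟩
          · intro j
            induction j using Fin.addCases with
            | left j =>
                obtain ⟨k, hk, hkeq⟩ := hy₁ j
                exact ⟨k, hk, by rw [hkeq]; simp⟩
            | right j => exact ⟨c⁻¹, inv_mem hc, by simp⟩
          · simp only [MlWord.eval, update_comp_castAdd, update_castAdd_natAdd,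
              Fin.addCases_left, Fin.addCases_right, heq, MlWord.eval_conj,
              ← hc_def, commutatorElement_def]
            group
      | right i =>
          obtain ⟨y₂, hy₂, heq⟩ := ihv (fun j => g (Fin.natAdd a j)) i
          set c := v.eval (Function.update (fun j => g (Fin.natAdd a j)) i h) with hc_def
          have hc : c ∈ H := MlWord.eval_mem v _ i (by simp [hh])
          set A := u.eval (fun j => g (Fin.castAdd b j)) with hA_def
          set d₁ := A * c⁻¹ * A⁻¹ with hd₁_def
          have hd₁ : d₁ ∈ H := by
            simpa [hd₁_def, mul_assoc] using
              Subgroup.Normal.conj_mem ‹H.Normal› _ (inv_mem hc) A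
          set d₂ := c * d₁ with hd₂_def
          have hd₂ : d₂ ∈ H := mul_mem hc hd₁
          refine ⟨Fin.addCases (fun j => d₁⁻¹ * g (Fin.castAdd b j) * d₁)
              (fun j => d₂⁻¹ * y₂ j * d₂), ?_, ?_⟩
          · intro j
            induction j using Fin.addCases with
            | left j => exact ⟨d₁, hd₁, by simp⟩
            | right j =>
                obtain ⟨k, hk, hkeq⟩ := hy₂ j
                refine ⟨k * d₂, mul_mem hk hd₂, ?_⟩
                simp only [Fin.addCases_right]; rw [← hkeq]
                group
          · simp only [MlWord.eval, update_comp_natAdd, update_natAdd_castAdd,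
              Fin.addCases_left, Fin.addCases_right, heq, MlWord.eval_conj,
              ← hA_def, ← hc_def, hd₂_def, hd₁_def, commutatorElement_def]
            group
end
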